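/- arXiv:2211.11232 — 10 statements merged into one kernel-verified Lean document; each statement's English description precedes it below -/
import Mathlib

section
/- Let S ⊆ {-1,0,1}² be a step set with nonnegative weights p_{u,v} summing to 1, and let K(x,y) = xy(Σ_{(u,v)∈S} p_{u,v} x^{-u} y^{-v} − 1), a polynomial in x and y. For every function h : ℤ² → ℝ with h(i,j) = 0 whenever i < 0 or j < 0, the following identity holds in the ring of formal power series ℝ[[x,y]]: K(x,y)·H(x,y) = y·K(x,0)·B(x) + x·K(0,y)·C(y) − xy·K(0,0)·h(0,0) + xy·G(x,y), where H(x,y) = Σ_{i,j≥0} h(i,j) x^{i+1} y^{j+1}, B(x) = Σ_{i≥0} h(i,0) x^{i+1}, C(y) = Σ_{j≥0} h(0,j) y^{j+1}, and G(x,y) = Σ_{i,j≥0} (Δh)(i,j) x^{i+1} y^{j+1}. -/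
open Finset

/-- The discrete Laplacian associated with weights `p` on the step set `{-1,0,1}²`:
`(Δh)(i,j) = Σ_{(u,v)} p u v · h(i+u, j+v) − h(i,j)` for `i,j ≥ 0`, and `0` otherwise. -/
noncomputable def dLap (p : ℤ → ℤ → ℝ) (h : ℤ → ℤ → ℝ) : ℤ → ℤ → ℝ :=
  fun i j =>
    if 0 ≤ i ∧ 0 ≤ j then
      (∑ u ∈ ({-1, 0, 1} : Finset ℤ), ∑ v ∈ ({-1, 0, 1} : Finset ℤ),
        p u v * h (i + u) (j + v)) - h i j
    else 0

/-- The kernel `K(x,y) = xy(Σ_{(u,v)} p u v · x^{-u} y^{-v} − 1)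
= Σ_{(u,v)} p u v · x^{1-u} y^{1-v} − xy`, as a power series in `x = X 0`, `y = X 1`. -/
noncomputable def walkKernel (p : ℤ → ℤ → ℝ) : MvPowerSeries (Fin 2) ℝ :=
  (∑ u ∈ ({-1, 0, 1} : Finset ℤ), ∑ v ∈ ({-1, 0, 1} : Finset ℤ),
      (MvPowerSeries.C : ℝ →+* MvPowerSeries (Fin 2) ℝ) (p u v) * (MvPowerSeries.X 0) ^ (1 - u).toNat *
        (MvPowerSeries.X 1) ^ (1 - v).toNat) -
    MvPowerSeries.X 0 * MvPowerSeries.X 1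

/-- `K(x,0) = Σ_u p u 1 · x^{1-u}`, the kernel evaluated at `y = 0`. -/
noncomputable def walkKernelX (p : ℤ → ℤ → ℝ) : MvPowerSeries (Fin 2) ℝ :=
  ∑ u ∈ ({-1, 0, 1} : Finset ℤ),
    (MvPowerSeries.C : ℝ →+* MvPowerSeries (Fin 2) ℝ) (p u 1) * (MvPowerSeries.X 0) ^ (1 - u).toNat

/-- `K(0,y) = Σ_v p 1 v · y^{1-v}`, the kernel evaluated at `x = 0`. -/
noncomputable def walkKernelY (p : ℤ → ℤ → ℝ) : MvPowerSeries (Fin 2) ℝ :=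
  ∑ v ∈ ({-1, 0, 1} : Finset ℤ),
    (MvPowerSeries.C : ℝ →+* MvPowerSeries (Fin 2) ℝ) (p 1 v) * (MvPowerSeries.X 1) ^ (1 - v).toNat

/-- The generating function `Σ_{i,j≥0} g(i,j) x^{i+1} y^{j+1}` of `g : ℤ² → ℝ` (assumed to
vanish off the quarter plane), as a power series: its coefficient on `x^a y^b` is
`g(a−1, b−1)` (which vanishes automatically if `a = 0` or `b = 0`). -/
noncomputable def genFun (g : ℤ → ℤ → ℝ) : MvPowerSeries (Fin 2) ℝ :=
  fun m => g ((m 0 : ℤ) - 1) ((m 1 : ℤ) - 1)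

/-- The generating function `B(x) = Σ_{i≥0} g(i,0) x^{i+1}` of the values of `g` on the
horizontal axis. -/
noncomputable def genFunX (g : ℤ → ℤ → ℝ) : MvPowerSeries (Fin 2) ℝ :=
  fun m => if m 1 = 0 then g ((m 0 : ℤ) - 1) 0 else 0

/-- The generating function `C(y) = Σ_{j≥0} g(0,j) y^{j+1}` of the values of `g` on the
vertical axis. -/
noncomputable def genFunY (g : ℤ → ℤ → ℝ) : MvPowerSeries (Fin 2) ℝ :=
  fun m => if m 0 = 0 then g 0 ((m 1 : ℤ) - 1) else 0


open Finsupp MvPowerSeries Finset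

noncomputable def mk2 (A B : ℕ) : Fin 2 →₀ ℕ := Finsupp.single 0 A + Finsupp.single 1 B

lemma mk2_apply0 (A B : ℕ) : mk2 A B 0 = A := by simp [mk2]
lemma mk2_apply1 (A B : ℕ) : mk2 A B 1 = B := by simp [mk2, Finsupp.single_apply]

lemma fin2_eq (m : Fin 2 →₀ ℕ) : m = mk2 (m 0) (m 1) := by
  ext x; fin_cases x
  · simp [mk2_apply0]
  · simp [mk2_apply1]

lemma mk2_inj (A B A' B' : ℕ) : mk2 A B = mk2 A' B' ↔ A = A' ∧ B = B' := by
  constructor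
  · intro e
    exact ⟨by rw [← mk2_apply0 A B, e, mk2_apply0], by rw [← mk2_apply1 A B, e, mk2_apply1]⟩
  · rintro ⟨rfl, rfl⟩; rfl

lemma coeff_shift (c : ℝ) (s t : ℕ) (F : MvPowerSeries (Fin 2) ℝ) (m : Fin 2 →₀ ℕ) :
    MvPowerSeries.coeff m
      ((MvPowerSeries.C : ℝ →+* MvPowerSeries (Fin 2) ℝ) c * MvPowerSeries.X 0 ^ s * MvPowerSeries.X 1 ^ t * F) =
    if s ≤ m 0 ∧ t ≤ m 1 then c * F (mk2 (m 0 - s) (m 1 - t)) else 0 := by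
  have e : ((MvPowerSeries.C : ℝ →+* MvPowerSeries (Fin 2) ℝ) c * MvPowerSeries.X 0 ^ s * MvPowerSeries.X 1 ^ t)
      = monomial (mk2 s t) c := by
    rw [X_pow_eq, X_pow_eq, show (MvPowerSeries.C : ℝ →+* MvPowerSeries (Fin 2) ℝ) c = monomial 0 c from rfl,
      monomial_mul_monomial, monomial_mul_monomial]
    simp [mk2]
  rw [e, coeff_monomial_mul]
  have hle : mk2 s t ≤ m ↔ s ≤ m 0 ∧ t ≤ m 1 := by
    constructor
    · intro hl; exact ⟨by simpa [mk2_apply0] using hl 0, by simpa [mk2_apply1] using hl 1⟩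
    · intro ⟨h1, h2⟩ x
      fin_cases x
      · simpa [mk2_apply0] using h1
      · simpa [mk2_apply1] using h2
  have hsub : m - mk2 s t = mk2 (m 0 - s) (m 1 - t) := by
    ext x; fin_cases x
    · simp [Finsupp.tsub_apply, mk2_apply0]
    · simp [Finsupp.tsub_apply, mk2_apply1]
  rw [hsub]
  by_cases hc : s ≤ m 0 ∧ t ≤ m 1
  · rw [if_pos (hle.2 hc), if_pos hc]; rfl
  · rw [if_neg (fun hh => hc (hle.1 hh)), if_neg hc]

lemma sum3 (f : ℤ → ℝ) : ∑ u ∈ ({-1,0,1} : Finset ℤ), f u = f (-1) + f 0 + f 1 := by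
  rw [show ({-1,0,1}:Finset ℤ) = insert (-1) (insert 0 {1}) from rfl,
    Finset.sum_insert (by decide), Finset.sum_insert (by decide), Finset.sum_singleton, add_assoc]


lemma genFun_mk2 (g : ℤ → ℤ → ℝ) (A B : ℕ) :
    genFun g (mk2 A B) = g ((A:ℤ)-1) ((B:ℤ)-1) := by
  simp [genFun, mk2_apply0, mk2_apply1]

lemma genFunX_mk2 (g : ℤ → ℤ → ℝ) (A B : ℕ) :
    genFunX g (mk2 A B) = if B = 0 then g ((A:ℤ)-1) 0 else 0 := by
  simp [genFunX, mk2_apply0, mk2_apply1]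

lemma genFunY_mk2 (g : ℤ → ℤ → ℝ) (A B : ℕ) :
    genFunY g (mk2 A B) = if A = 0 then g 0 ((B:ℤ)-1) else 0 := by
  simp [genFunY, mk2_apply0, mk2_apply1]

lemma one_mk2 (A B : ℕ) :
    (1 : MvPowerSeries (Fin 2) ℝ) (mk2 A B) = if A = 0 ∧ B = 0 then 1 else 0 := by
  have e : (1 : MvPowerSeries (Fin 2) ℝ) (mk2 A B) = MvPowerSeries.coeff (mk2 A B) 1 := rfl
  rw [e, MvPowerSeries.coeff_one]
  have : mk2 A B = 0 ↔ A = 0 ∧ B = 0 := by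
    rw [show (0 : Fin 2 →₀ ℕ) = mk2 0 0 by simp [mk2], mk2_inj]
  simp [this]

/-- The functional equation: for any step weights `p` on `{-1,0,1}²` (nonnegative, summing
to `1`) and any `h : ℤ² → ℝ` with Dirichlet boundary conditions, in `ℝ[[x,y]]`:
`K(x,y)·H(x,y) = y·K(x,0)·B(x) + x·K(0,y)·C(y) − xy·K(0,0)·h(0,0) + xy·G(x,y)`,
where `H`, `B`, `C` are the generating functions of `h` and its boundary values, `G` is the
generating function of `Δh`, and `K(0,0) = p 1 1`. -/
theorem kernel_functional_equation
    (p : ℤ → ℤ → ℝ) (hp0 : ∀ u v : ℤ, 0 ≤ p u v)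
    (hp1 : ∑ u ∈ ({-1, 0, 1} : Finset ℤ), ∑ v ∈ ({-1, 0, 1} : Finset ℤ), p u v = 1)
    (h : ℤ → ℤ → ℝ) (hD : ∀ i j : ℤ, i < 0 ∨ j < 0 → h i j = 0) :
    walkKernel p * genFun h =
      MvPowerSeries.X 1 * walkKernelX p * genFunX h +
        MvPowerSeries.X 0 * walkKernelY p * genFunY h -
        MvPowerSeries.X 0 * MvPowerSeries.X 1 *
          (MvPowerSeries.C : ℝ →+* MvPowerSeries (Fin 2) ℝ) (p 1 1 * h 0 0) +
        MvPowerSeries.X 0 * MvPowerSeries.X 1 * genFun (dLap p h) := by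
  have e1 : walkKernel p * genFun h =
      (∑ u ∈ ({-1,0,1} : Finset ℤ), ∑ v ∈ ({-1,0,1} : Finset ℤ),
        (MvPowerSeries.C : ℝ →+* MvPowerSeries (Fin 2) ℝ) (p u v) * MvPowerSeries.X 0 ^ (1-u).toNat *
          MvPowerSeries.X 1 ^ (1-v).toNat * genFun h) -
      (MvPowerSeries.C : ℝ →+* MvPowerSeries (Fin 2) ℝ) 1 * MvPowerSeries.X 0 ^ 1 * MvPowerSeries.X 1 ^ 1 * genFun h := by
    rw [walkKernel, sub_mul, Finset.sum_mul]
    congr 1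
    · exact Finset.sum_congr rfl fun u _ => by rw [Finset.sum_mul]
    · rw [map_one]; ring
  have e2 : MvPowerSeries.X 1 * walkKernelX p * genFunX h =
      ∑ u ∈ ({-1,0,1} : Finset ℤ),
        (MvPowerSeries.C : ℝ →+* MvPowerSeries (Fin 2) ℝ) (p u 1) * MvPowerSeries.X 0 ^ (1-u).toNat *
          MvPowerSeries.X 1 ^ 1 * genFunX h := by
    rw [walkKernelX, Finset.mul_sum, Finset.sum_mul]
    exact Finset.sum_congr rfl fun u _ => by ring
  have e3 : MvPowerSeries.X 0 * walkKernelY p * genFunY h =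
      ∑ v ∈ ({-1,0,1} : Finset ℤ),
        (MvPowerSeries.C : ℝ →+* MvPowerSeries (Fin 2) ℝ) (p 1 v) * MvPowerSeries.X 0 ^ 1 *
          MvPowerSeries.X 1 ^ (1-v).toNat * genFunY h := by
    rw [walkKernelY, Finset.mul_sum, Finset.sum_mul]
    exact Finset.sum_congr rfl fun v _ => by ring
  have e4 : MvPowerSeries.X 0 * MvPowerSeries.X 1 *
        (MvPowerSeries.C : ℝ →+* MvPowerSeries (Fin 2) ℝ) (p 1 1 * h 0 0) =
      (MvPowerSeries.C : ℝ →+* MvPowerSeries (Fin 2) ℝ) (p 1 1 * h 0 0) * MvPowerSeries.X 0 ^ 1 * MvPowerSeries.X 1 ^ 1 *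
        (1 : MvPowerSeries (Fin 2) ℝ) := by ring
  have e5 : MvPowerSeries.X 0 * MvPowerSeries.X 1 * genFun (dLap p h) =
      (MvPowerSeries.C : ℝ →+* MvPowerSeries (Fin 2) ℝ) 1 * MvPowerSeries.X 0 ^ 1 * MvPowerSeries.X 1 ^ 1 *
        genFun (dLap p h) := by rw [map_one]; ring
  apply MvPowerSeries.ext
  intro m
  obtain ⟨a, b, rfl⟩ : ∃ a b, m = mk2 a b := ⟨_, _, fin2_eq m⟩
  rw [e1, e2, e3, e4, e5]
  simp only [map_sub, map_add, map_sum, coeff_shift, mk2_apply0, mk2_apply1, sum3,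
    genFun_mk2, genFunX_mk2, genFunY_mk2, one_mk2,
    show ((1:ℤ) - -1).toNat = 2 by decide, show ((1:ℤ) - 0).toNat = 1 by decide,
    show ((1:ℤ) - 1).toNat = 0 by decide]
  have hA : ∀ j : ℤ, h (-1) j = 0 := fun j => hD _ _ (Or.inl (by norm_num))
  have hB : ∀ i : ℤ, h i (-1) = 0 := fun i => hD _ _ (Or.inr (by norm_num))
  rcases a with _|_|a <;> rcases b with _|_|b <;>
    (simp only [dLap, sum3]; push_cast; norm_num [hA, hB]) <;>
    push_cast <;> ring_nf
end

section
/- Let S ⊆ {-1,0,1}² be a step set with nonnegative weights p_{u,v} summing to 1 and with p_{0,0} < 1. If h : ℤ² → ℝ satisfies Dirichlet boundary conditions, is discrete harmonic (i.e. (Δh)(i,j) = 0 for all i,j ≥ 0), and moreover vanishes on both boundary axes, i.e. h(i,0) = 0 for all i ≥ 0 and h(0,j) = 0 for all j ≥ 0, then h is identically zero. -/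
open Finset

/-- If `h` satisfies Dirichlet boundary conditions, is discrete harmonic for weights `p`
(nonnegative, summing to `1`, with `p 0 0 < 1`), and vanishes on both boundary axes, then
`h` is identically zero. -/
theorem harmonic_vanishing_on_axes_is_zero
    (p : ℤ → ℤ → ℝ) (hp0 : ∀ u v : ℤ, 0 ≤ p u v)
    (hp1 : ∑ u ∈ ({-1, 0, 1} : Finset ℤ), ∑ v ∈ ({-1, 0, 1} : Finset ℤ), p u v = 1)
    (hp00 : p 0 0 < 1)
    (h : ℤ → ℤ → ℝ)
    (hD : ∀ i j : ℤ, i < 0 ∨ j < 0 → h i j = 0)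
    (hharm : ∀ i j : ℤ, 0 ≤ i → 0 ≤ j → dLap p h i j = 0)
    (hax1 : ∀ i : ℤ, 0 ≤ i → h i 0 = 0)
    (hax2 : ∀ j : ℤ, 0 ≤ j → h 0 j = 0) :
    h = 0 := by
  -- expanded form of the probability sum
  have psum : p (-1) (-1) + p (-1) 0 + p (-1) 1 + (p 0 (-1) + p 0 0 + p 0 1)
      + (p 1 (-1) + p 1 0 + p 1 1) = 1 := by
    rw [← hp1]
    simp [Finset.sum_insert, Finset.mem_insert, Finset.mem_singleton]
    ring
  -- expanded form of harmonicity
  have harm : ∀ a b : ℤ, 0 ≤ a → 0 ≤ b →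
      p (-1) (-1) * h (a-1) (b-1) + p (-1) 0 * h (a-1) b + p (-1) 1 * h (a-1) (b+1)
      + (p 0 (-1) * h a (b-1) + p 0 0 * h a b + p 0 1 * h a (b+1))
      + (p 1 (-1) * h (a+1) (b-1) + p 1 0 * h (a+1) b + p 1 1 * h (a+1) (b+1))
      = h a b := by
    intro a b ha hb
    have H := hharm a b ha hb
    simp only [dLap, if_pos (And.intro ha hb), sub_eq_zero] at H
    calc p (-1) (-1) * h (a-1) (b-1) + p (-1) 0 * h (a-1) b + p (-1) 1 * h (a-1) (b+1)
        + (p 0 (-1) * h a (b-1) + p 0 0 * h a b + p 0 1 * h a (b+1))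
        + (p 1 (-1) * h (a+1) (b-1) + p 1 0 * h (a+1) b + p 1 1 * h (a+1) (b+1))
        = ∑ u ∈ ({-1, 0, 1} : Finset ℤ), ∑ v ∈ ({-1, 0, 1} : Finset ℤ),
            p u v * h (a + u) (b + v) := by
          simp [Finset.sum_insert, Finset.mem_insert, Finset.mem_singleton]
          ring
      _ = h a b := H
  -- main claim by strong induction on i+j
  have key : ∀ n : ℕ, ∀ i j : ℤ, 0 ≤ i → 0 ≤ j → i + j = (n : ℤ) → h i j = 0 := by
    intro n
    induction n using Nat.strong_induction_on with
    | _ n IH =>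
    intro i j hi hj hij
    -- anything with coordinate sum < n vanishes
    have hzero : ∀ a b : ℤ, a + b < (n : ℤ) → h a b = 0 := by
      intro a b hab
      rcases lt_or_ge a 0 with ha | ha
      · exact hD a b (Or.inl ha)
      rcases lt_or_ge b 0 with hb | hb
      · exact hD a b (Or.inr hb)
      have hnn : (0:ℤ) ≤ a + b := by linarith
      have hcast : ((a+b).toNat : ℤ) = a + b := Int.toNat_of_nonneg hnn
      have hlt : (a+b).toNat < n := by omega
      exact IH _ hlt a b ha hb hcast.symm
    rcases eq_or_lt_of_le hi with hi0 | hi1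
    · rw [← hi0]; exact hax2 j hj
    rcases eq_or_lt_of_le hj with hj0 | hj1
    · rw [← hj0]; exact hax1 i hi
    -- now 1 ≤ i, 1 ≤ j, so 2 ≤ n
    have hi1 : 1 ≤ i := hi1
    have hj1 : 1 ≤ j := hj1
    set N : ℤ := (n : ℤ) with hN
    have hN2 : 2 ≤ N := by omega
    have hjN : j = N - i := by omega
    subst hjN
    by_cases h11 : p 1 1 ≠ 0
    · -- Case A : p 1 1 > 0, use the equation at (i-1, j-1)
      have H := harm (i-1) (N - i - 1) (by omega) (by omega)
      have z : ∀ a b : ℤ, a + b < N → h a b = 0 := hzero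
      rw [z (i-1-1) (N-i-1-1) (by omega), z (i-1-1) (N-i-1) (by omega),
        z (i-1-1) (N-i-1+1) (by omega), z (i-1) (N-i-1-1) (by omega),
        z (i-1) (N-i-1) (by omega), z (i-1) (N-i-1+1) (by omega),
        z (i-1+1) (N-i-1-1) (by omega), z (i-1+1) (N-i-1) (by omega)] at H
      have : p 1 1 * h (i-1+1) (N-i-1+1) = 0 := by linarith
      have h0 : h (i-1+1) (N-i-1+1) = 0 := by
        rcases mul_eq_zero.mp this with hc | hc
        · exact absurd hc h11
        · exact hc
      rw [show i - 1 + 1 = i by ring, show N - i - 1 + 1 = N - i by ring] at h0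
      exact h0
    · push_neg at h11
      -- the "row" relation on the diagonal of sum N - 1
      have row : ∀ a b : ℤ, 0 ≤ a → 0 ≤ b → a + b = N - 1 →
          p 1 0 * h (a+1) b + p 0 1 * h a (b+1) = 0 := by
        intro a b ha hb hab
        have H := harm a b ha hb
        rw [hzero (a-1) (b-1) (by omega), hzero (a-1) b (by omega),
          hzero (a-1) (b+1) (by omega), hzero a (b-1) (by omega),
          hzero a b (by omega), hzero (a+1) (b-1) (by omega), h11] at H
        linarith
      by_cases h10 : p 1 0 ≠ 0
      · -- Case B1 : march along the diagonal of sum N from the axis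
        have claim : ∀ k : ℕ, (k : ℤ) ≤ N → h (k : ℤ) (N - (k : ℤ)) = 0 := by
          intro k
          induction k with
          | zero =>
            intro _
            simpa using hax2 N (by omega)
          | succ k ih =>
            intro hk
            have hk' : (k : ℤ) + 1 ≤ N := by push_cast at hk; linarith
            have hrow := row (k : ℤ) (N - 1 - (k : ℤ)) (by positivity) (by omega) (by ring)
            have hprev : h (k : ℤ) (N - 1 - (k : ℤ) + 1) = 0 := by
              rw [show N - 1 - (k:ℤ) + 1 = N - (k:ℤ) by ring]
              exact ih (by linarith)
            rw [hprev, mul_zero, add_zero] at hrow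
            have h0 : h ((k:ℤ)+1) (N - 1 - (k:ℤ)) = 0 := by
              rcases mul_eq_zero.mp hrow with hc | hc
              · exact absurd hc h10
              · exact hc
            push_cast
            rw [show N - ((k:ℤ)+1) = N - 1 - (k:ℤ) by ring]
            exact h0
        have := claim i.toNat (by omega)
        rwa [Int.toNat_of_nonneg hi] at this
      · push_neg at h10
        by_cases h01 : p 0 1 ≠ 0
        · -- Case B2
          have hrow := row i (N - i - 1) (by omega) (by omega) (by ring)
          rw [h10, zero_mul, zero_add] at hrow
          have h0 : h i (N - i - 1 + 1) = 0 := by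
            rcases mul_eq_zero.mp hrow with hc | hc
            · exact absurd hc h01
            · exact hc
          rwa [show N - i - 1 + 1 = N - i by ring] at h0
        · push_neg at h01
          -- Case B3 : maximum principle on the diagonal of sum N
          -- recurrence on the diagonal
          have diag : ∀ k : ℤ, 1 ≤ k → k ≤ N - 1 →
              (1 - p 0 0) * h k (N - k)
              = p (-1) 1 * h (k-1) (N-k+1) + p 1 (-1) * h (k+1) (N-k-1) := by
            intro k hk1 hk2
            have H := harm k (N - k) (by omega) (by omega)
            rw [hzero (k-1) (N-k-1) (by omega), hzero (k-1) (N-k) (by omega),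
              hzero k (N-k-1) (by omega), h01, h10, h11] at H
            linarith
          have hq : 0 < 1 - p 0 0 := by linarith
          have hab_le : p (-1) 1 + p 1 (-1) ≤ 1 - p 0 0 := by
            have := hp0 (-1) (-1); have := hp0 (-1) 0; have := hp0 0 (-1)
            linarith
          obtain ⟨k0, hk0T, hmax⟩ := Finset.exists_max_image (Finset.Icc (0:ℤ) N)
            (fun k => |h k (N - k)|) ⟨0, by simp [Finset.mem_Icc]; omega⟩
          set M : ℝ := |h k0 (N - k0)| with hM
          have hmax' : ∀ k : ℤ, 0 ≤ k → k ≤ N → |h k (N - k)| ≤ M := by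
            intro k h1 h2
            exact hmax k (by simp [Finset.mem_Icc]; omega)
          have hX0 : h 0 (N - 0) = 0 := by rw [sub_zero]; exact hax2 N (by omega)
          have hXN : h N (N - N) = 0 := by rw [sub_self]; exact hax1 N (by omega)
          rcases eq_or_lt_of_le (abs_nonneg (h i (N - i))) with hMi | hMpos'
          · exact abs_eq_zero.mp hMi.symm
          have hMpos : 0 < M := lt_of_lt_of_le hMpos' (hmax' i hi (by omega))
          -- key step of the maximum principle
          have step : ∀ k : ℤ, 1 ≤ k → k ≤ N - 1 → |h k (N - k)| = M →
              p (-1) 1 * (M - |h (k-1) (N-(k-1))|) = 0 ∧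
              p 1 (-1) * (M - |h (k+1) (N-(k+1))|) = 0 := by
            intro k h1 h2 hXk
            have hd := diag k h1 h2
            have hb1 : |h (k-1) (N-(k-1))| ≤ M := hmax' (k-1) (by omega) (by omega)
            have hb2 : |h (k+1) (N-(k+1))| ≤ M := hmax' (k+1) (by omega) (by omega)
            have e1 : N - k + 1 = N - (k-1) := by ring
            have e2 : N - k - 1 = N - (k+1) := by ring
            rw [e1, e2] at hd
            have habs : (1 - p 0 0) * M ≤
                p (-1) 1 * |h (k-1) (N-(k-1))| + p 1 (-1) * |h (k+1) (N-(k+1))| := by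
              calc (1 - p 0 0) * M = |(1 - p 0 0) * h k (N - k)| := by
                    rw [abs_mul, abs_of_pos hq, hXk]
                _ = |p (-1) 1 * h (k-1) (N-(k-1)) + p 1 (-1) * h (k+1) (N-(k+1))| := by
                    rw [hd]
                _ ≤ |p (-1) 1 * h (k-1) (N-(k-1))| + |p 1 (-1) * h (k+1) (N-(k+1))| :=
                    abs_add_le _ _
                _ = p (-1) 1 * |h (k-1) (N-(k-1))| + p 1 (-1) * |h (k+1) (N-(k+1))| := by
                    rw [abs_mul, abs_mul, abs_of_nonneg (hp0 (-1) 1),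
                      abs_of_nonneg (hp0 1 (-1))]
            have hub : (p (-1) 1 + p 1 (-1)) * M ≤ (1 - p 0 0) * M :=
              mul_le_mul_of_nonneg_right hab_le hMpos.le
            have t1 : 0 ≤ p (-1) 1 * (M - |h (k-1) (N-(k-1))|) :=
              mul_nonneg (hp0 (-1) 1) (by linarith)
            have t2 : 0 ≤ p 1 (-1) * (M - |h (k+1) (N-(k+1))|) :=
              mul_nonneg (hp0 1 (-1)) (by linarith)
            have hsum : p (-1) 1 * (M - |h (k-1) (N-(k-1))|)
                + p 1 (-1) * (M - |h (k+1) (N-(k+1))|) ≤ 0 := by nlinarith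
            constructor <;> linarith
          have hk0mem := Finset.mem_Icc.mp hk0T
          have hk0ne0 : k0 ≠ 0 := by
            intro hc; rw [hc, hX0, abs_zero] at hM; exact absurd hM (ne_of_gt hMpos)
          have hk0neN : k0 ≠ N := by
            intro hc; rw [hc, hXN, abs_zero] at hM; exact absurd hM (ne_of_gt hMpos)
          have hk01 : 1 ≤ k0 := by omega
          have hk0N : k0 ≤ N - 1 := by omega
          by_cases hm1 : p (-1) 1 ≠ 0
          · -- propagate the maximum down to the axis
            have claim : ∀ t : ℕ, (t : ℤ) ≤ k0 → |h (k0 - t) (N - (k0 - t))| = M := by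
              intro t
              induction t with
              | zero => intro _; simpa using hM.symm
              | succ t ih =>
                intro ht
                have ht1 : (t : ℤ) + 1 ≤ k0 := by push_cast at ht; linarith
                have hXt := ih (by linarith)
                have hs := (step (k0 - t) (by omega) (by omega) hXt).1
                have h0 : M - |h (k0 - t - 1) (N - (k0 - t - 1))| = 0 := by
                  rcases mul_eq_zero.mp hs with hc | hc
                  · exact absurd hc hm1
                  · exact hc
                push_cast
                rw [show k0 - ((t:ℤ)+1) = k0 - t - 1 by ring]
                linarith [abs_nonneg (h (k0 - (t:ℤ) - 1) (N - (k0 - (t:ℤ) - 1)))]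
            have hc := claim k0.toNat (by omega)
            rw [Int.toNat_of_nonneg (by omega : (0:ℤ) ≤ k0), sub_self, hX0, abs_zero] at hc
            exact absurd hc.symm (ne_of_gt hMpos)
          · push_neg at hm1
            -- propagate the maximum up to the other axis
            have claim : ∀ t : ℕ, k0 + (t : ℤ) ≤ N → |h (k0 + t) (N - (k0 + t))| = M := by
              intro t
              induction t with
              | zero => intro _; simpa using hM.symm
              | succ t ih =>
                intro ht
                have ht1 : k0 + (t : ℤ) + 1 ≤ N := by push_cast at ht; linarith
                have hXt := ih (by linarith)
                have hs := (step (k0 + t) (by omega) (by omega) hXt).2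
                have hp1m : p 1 (-1) ≠ 0 := by
                  intro hc
                  have hd := diag k0 hk01 hk0N
                  rw [hm1, hc, zero_mul, zero_mul, add_zero] at hd
                  have : h k0 (N - k0) = 0 := by
                    rcases mul_eq_zero.mp hd with hc2 | hc2
                    · exact absurd hc2 (ne_of_gt hq)
                    · exact hc2
                  rw [this, abs_zero] at hM
                  exact absurd hM (ne_of_gt hMpos)
                have h0 : M - |h (k0 + t + 1) (N - (k0 + t + 1))| = 0 := by
                  rcases mul_eq_zero.mp hs with hc | hc
                  · exact absurd hc hp1m
                  · exact hc
                push_cast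
                rw [show k0 + ((t:ℤ)+1) = k0 + t + 1 by ring]
                linarith [abs_nonneg (h (k0 + (t:ℤ) + 1) (N - (k0 + (t:ℤ) + 1)))]
            have hc := claim (N - k0).toNat (by omega)
            rw [Int.toNat_of_nonneg (by omega : (0:ℤ) ≤ N - k0)] at hc
            rw [show k0 + (N - k0) = N by ring, hXN, abs_zero] at hc
            exact absurd hc.symm (ne_of_gt hMpos)
  funext i j
  show h i j = 0
  rcases lt_or_ge i 0 with hi | hi
  · exact hD i j (Or.inl hi)
  rcases lt_or_ge j 0 with hj | hj
  · exact hD i j (Or.inr hj)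
  exact key (i+j).toNat i j hi hj (Int.toNat_of_nonneg (by omega)).symm
end

section
/- Let S ⊆ {-1,0,1}² be a step set with nonnegative weights p_{u,v} summing to 1, and let (H_m^k)_{m,k≥1} be a family of functions ℤ² → ℝ satisfying Dirichlet boundary conditions such that: (1) each H_1^k is discrete harmonic and every discrete harmonic function h admits a real sequence (a_k)_{k≥1} with h(i,j) = Σ_{k≥1} a_k H_1^k(i,j) for all (i,j); (2) Δ H_{m+1}^k = H_m^k for all m,k ≥ 1; (3) for every point (i,j) and every m ≥ 1, one has H_m^k(i,j) = 0 for all but finitely many k (so all the sums above are finite at each point and Δ may be applied term by term). Then for every n ≥ 1 and every discrete polyharmonic function h of order n (Δⁿh = 0, Dirichlet boundary conditions), there exist real coefficients a_{m,k} for 1 ≤ m ≤ n and k ≥ 1 such that h(i,j) = Σ_{m=1}^{n} Σ_{k≥1} a_{m,k} H_m^k(i,j) for all (i,j). -/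
open Finset

/-- Suppose `(H m k)_{m,k ≥ 1}` is a family of Dirichlet functions such that: each `H 1 k`
is discrete harmonic and every discrete harmonic function is a (pointwise) series
`Σ_{k≥1} a_k · H 1 k`; `Δ H (m+1) k = H m k`; and at every point, for each `m`, only finitely
many `H m k` are nonzero. Then every discrete polyharmonic function `h` of order `n ≥ 1`
(with Dirichlet boundary conditions) can be written as
`h(i,j) = Σ_{m=1}^{n} Σ_{k≥1} a_{m,k} · H m k (i,j)`. -/
theorem all_polyharmonic_from_family
    (p : ℤ → ℤ → ℝ) (hp0 : ∀ u v : ℤ, 0 ≤ p u v)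
    (hp1 : ∑ u ∈ ({-1, 0, 1} : Finset ℤ), ∑ v ∈ ({-1, 0, 1} : Finset ℤ), p u v = 1)
    (H : ℕ → ℕ → (ℤ → ℤ → ℝ))
    (hHdir : ∀ m k : ℕ, 1 ≤ m → 1 ≤ k → ∀ i j : ℤ, i < 0 ∨ j < 0 → H m k i j = 0)
    (hH1harm : ∀ k : ℕ, 1 ≤ k → dLap p (H 1 k) = 0)
    (hH1basis : ∀ g : ℤ → ℤ → ℝ, (∀ i j : ℤ, i < 0 ∨ j < 0 → g i j = 0) →
      dLap p g = 0 →
      ∃ a : ℕ → ℝ, ∀ i j : ℤ, g i j = ∑' k : ℕ, a k * H 1 (k + 1) i j)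
    (hchain : ∀ m k : ℕ, 1 ≤ m → 1 ≤ k → dLap p (H (m + 1) k) = H m k)
    (hfin : ∀ m : ℕ, 1 ≤ m → ∀ i j : ℤ, {k : ℕ | 1 ≤ k ∧ H m k i j ≠ 0}.Finite)
    (n : ℕ) (hn : 1 ≤ n)
    (h : ℤ → ℤ → ℝ) (hdir : ∀ i j : ℤ, i < 0 ∨ j < 0 → h i j = 0)
    (hpoly : (dLap p)^[n] h = 0) :
    ∃ a : ℕ → ℕ → ℝ, ∀ i j : ℤ,
      h i j = ∑ m ∈ Finset.Icc 1 n, ∑' k : ℕ, a m k * H m (k + 1) i j := by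
  classical
  -- finite support of `k ↦ H m (k+1) i j`
  have hsupp : ∀ m : ℕ, 1 ≤ m → ∀ i j : ℤ, {k : ℕ | H m (k + 1) i j ≠ 0}.Finite := by
    intro m hm i j
    have h1 : ((fun k : ℕ => k + 1) ⁻¹' {k : ℕ | 1 ≤ k ∧ H m k i j ≠ 0}).Finite :=
      (hfin m hm i j).preimage ((add_left_injective 1).injOn)
    exact h1.subset fun k hk => ⟨Nat.le_add_left 1 k, hk⟩
  -- key: the Laplacian can be applied term by term to a series in the `H (m+1)` family
  have key : ∀ m : ℕ, 1 ≤ m → ∀ c : ℕ → ℝ, ∀ i j : ℤ, 0 ≤ i → 0 ≤ j →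
      (∑ u ∈ ({-1, 0, 1} : Finset ℤ), ∑ v ∈ ({-1, 0, 1} : Finset ℤ),
        p u v * ∑' k : ℕ, c k * H (m + 1) (k + 1) (i + u) (j + v))
      - (∑' k : ℕ, c k * H (m + 1) (k + 1) i j) = ∑' k : ℕ, c k * H m (k + 1) i j := by
    intro m hm c i j hi hj
    set K : Finset ℕ :=
      ((hsupp (m + 1) (by omega) i j).toFinset ∪ (hsupp m hm i j).toFinset) ∪
      ((({-1, 0, 1} : Finset ℤ) ×ˢ ({-1, 0, 1} : Finset ℤ)).biUnion
        (fun uv => (hsupp (m + 1) (by omega) (i + uv.1) (j + uv.2)).toFinset)) with hKdef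
    have hK1 : ∀ k ∉ K, c k * H (m + 1) (k + 1) i j = 0 := by
      intro k hk
      have hz : H (m + 1) (k + 1) i j = 0 := by
        by_contra hne
        exact hk (Finset.mem_union_left _ (Finset.mem_union_left _
          ((hsupp (m + 1) (by omega) i j).mem_toFinset.2 hne)))
      rw [hz, mul_zero]
    have hK2 : ∀ k ∉ K, c k * H m (k + 1) i j = 0 := by
      intro k hk
      have hz : H m (k + 1) i j = 0 := by
        by_contra hne
        exact hk (Finset.mem_union_left _ (Finset.mem_union_right _
          ((hsupp m hm i j).mem_toFinset.2 hne)))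
      rw [hz, mul_zero]
    have hK3 : ∀ u ∈ ({-1, 0, 1} : Finset ℤ), ∀ v ∈ ({-1, 0, 1} : Finset ℤ),
        ∀ k ∉ K, c k * H (m + 1) (k + 1) (i + u) (j + v) = 0 := by
      intro u hu v hv k hk
      have hz : H (m + 1) (k + 1) (i + u) (j + v) = 0 := by
        by_contra hne
        refine hk (Finset.mem_union_right _ (Finset.mem_biUnion.2
          ⟨(u, v), Finset.mem_product.2 ⟨hu, hv⟩, ?_⟩))
        exact (hsupp (m + 1) (by omega) (i + u) (j + v)).mem_toFinset.2 hne
      rw [hz, mul_zero]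
    have hrw : ∑ u ∈ ({-1, 0, 1} : Finset ℤ), ∑ v ∈ ({-1, 0, 1} : Finset ℤ),
        p u v * ∑' k : ℕ, c k * H (m + 1) (k + 1) (i + u) (j + v)
        = ∑ u ∈ ({-1, 0, 1} : Finset ℤ), ∑ v ∈ ({-1, 0, 1} : Finset ℤ),
        p u v * ∑ k ∈ K, c k * H (m + 1) (k + 1) (i + u) (j + v) := by
      refine Finset.sum_congr rfl fun u hu => Finset.sum_congr rfl fun v hv => ?_
      rw [tsum_eq_sum (hK3 u hu v hv)]
    rw [hrw, tsum_eq_sum hK1, tsum_eq_sum hK2]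
    have hswap : (∑ k ∈ K, ∑ u ∈ ({-1, 0, 1} : Finset ℤ), ∑ v ∈ ({-1, 0, 1} : Finset ℤ),
        p u v * (c k * H (m + 1) (k + 1) (i + u) (j + v)))
        = ∑ u ∈ ({-1, 0, 1} : Finset ℤ), ∑ v ∈ ({-1, 0, 1} : Finset ℤ),
        p u v * ∑ k ∈ K, c k * H (m + 1) (k + 1) (i + u) (j + v) := by
      rw [Finset.sum_comm]
      refine Finset.sum_congr rfl fun u _ => ?_
      rw [Finset.sum_comm]
      refine Finset.sum_congr rfl fun v _ => ?_
      rw [Finset.mul_sum]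
    rw [← hswap, ← Finset.sum_sub_distrib]
    refine Finset.sum_congr rfl fun k _ => ?_
    have hev : (∑ u ∈ ({-1, 0, 1} : Finset ℤ), ∑ v ∈ ({-1, 0, 1} : Finset ℤ),
        p u v * H (m + 1) (k + 1) (i + u) (j + v)) - H (m + 1) (k + 1) i j
        = H m (k + 1) i j := by
      have hc := congrFun (congrFun (hchain m (k + 1) hm (by omega)) i) j
      simpa [dLap, if_pos (⟨hi, hj⟩ : 0 ≤ i ∧ 0 ≤ j)] using hc
    have hmul : ∑ u ∈ ({-1, 0, 1} : Finset ℤ), ∑ v ∈ ({-1, 0, 1} : Finset ℤ),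
        p u v * (c k * H (m + 1) (k + 1) (i + u) (j + v))
        = c k * ∑ u ∈ ({-1, 0, 1} : Finset ℤ), ∑ v ∈ ({-1, 0, 1} : Finset ℤ),
        p u v * H (m + 1) (k + 1) (i + u) (j + v) := by
      rw [Finset.mul_sum]
      refine Finset.sum_congr rfl fun u _ => ?_
      rw [Finset.mul_sum]
      refine Finset.sum_congr rfl fun v _ => ?_
      ring
    rw [hmul, ← hev]
    ring
  induction n, hn using Nat.le_induction generalizing h with
  | base =>
    obtain ⟨a, ha⟩ := hH1basis h hdir (by simpa using hpoly)
    refine ⟨fun _ k => a k, fun i j => ?_⟩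
    simpa using ha i j
  | succ n hn ih =>
    have hdir' : ∀ i j : ℤ, i < 0 ∨ j < 0 → dLap p h i j = 0 := by
      intro i j hij
      have hc : ¬ (0 ≤ i ∧ 0 ≤ j) := by omega
      simp [dLap, hc]
    have hpoly' : (dLap p)^[n] (dLap p h) = 0 := by
      rw [← Function.iterate_succ_apply]; exact hpoly
    obtain ⟨a, ha⟩ := ih (dLap p h) hdir' hpoly'
    have hGdir : ∀ i j : ℤ, i < 0 ∨ j < 0 →
        h i j - ∑ m ∈ Finset.Icc 1 n, ∑' k : ℕ, a m k * H (m + 1) (k + 1) i j = 0 := by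
      intro i j hij
      rw [hdir i j hij]
      have hz : ∀ m ∈ Finset.Icc 1 n,
          ∑' k : ℕ, a m k * H (m + 1) (k + 1) i j = 0 := by
        intro m hm
        have hzk : ∀ k : ℕ, a m k * H (m + 1) (k + 1) i j = 0 := fun k => by
          rw [hHdir (m + 1) (k + 1) (by omega) (by omega) i j hij, mul_zero]
        simp [hzk]
      rw [Finset.sum_eq_zero hz]
      ring
    have hGharm : dLap p (fun i j =>
        h i j - ∑ m ∈ Finset.Icc 1 n, ∑' k : ℕ, a m k * H (m + 1) (k + 1) i j) = 0 := by
      funext i j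
      by_cases hij : 0 ≤ i ∧ 0 ≤ j
      · simp only [dLap, if_pos hij, Pi.zero_apply]
        have hsum : (∑ m ∈ Finset.Icc 1 n, ∑ u ∈ ({-1, 0, 1} : Finset ℤ),
            ∑ v ∈ ({-1, 0, 1} : Finset ℤ),
            p u v * ∑' k : ℕ, a m k * H (m + 1) (k + 1) (i + u) (j + v))
            - ∑ m ∈ Finset.Icc 1 n, ∑' k : ℕ, a m k * H (m + 1) (k + 1) i j
            = ∑ m ∈ Finset.Icc 1 n, ∑' k : ℕ, a m k * H m (k + 1) i j := by
          rw [← Finset.sum_sub_distrib]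
          exact Finset.sum_congr rfl fun m hm =>
            key m (Finset.mem_Icc.1 hm).1 (a m) i j hij.1 hij.2
        have hd : (∑ u ∈ ({-1, 0, 1} : Finset ℤ), ∑ v ∈ ({-1, 0, 1} : Finset ℤ),
            p u v * h (i + u) (j + v)) - h i j
            = ∑ m ∈ Finset.Icc 1 n, ∑' k : ℕ, a m k * H m (k + 1) i j := by
          have := ha i j
          simpa [dLap, if_pos hij] using this
        have hswap2 : (∑ m ∈ Finset.Icc 1 n, ∑ u ∈ ({-1, 0, 1} : Finset ℤ),
            ∑ v ∈ ({-1, 0, 1} : Finset ℤ),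
            p u v * ∑' k : ℕ, a m k * H (m + 1) (k + 1) (i + u) (j + v))
            = ∑ u ∈ ({-1, 0, 1} : Finset ℤ), ∑ v ∈ ({-1, 0, 1} : Finset ℤ),
            p u v * ∑ m ∈ Finset.Icc 1 n,
              ∑' k : ℕ, a m k * H (m + 1) (k + 1) (i + u) (j + v) := by
          rw [Finset.sum_comm]
          refine Finset.sum_congr rfl fun u _ => ?_
          rw [Finset.sum_comm]
          refine Finset.sum_congr rfl fun v _ => ?_
          rw [Finset.mul_sum]
        simp only [mul_sub, Finset.sum_sub_distrib]
        rw [← hswap2]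
        linarith [hsum, hd]
      · simp [dLap, hij]
    obtain ⟨b, hb⟩ := hH1basis
      (fun i j => h i j - ∑ m ∈ Finset.Icc 1 n, ∑' k : ℕ, a m k * H (m + 1) (k + 1) i j)
      hGdir hGharm
    refine ⟨fun m k => if m = 1 then b k else a (m - 1) k, fun i j => ?_⟩
    have hb' := hb i j
    have hsplit : Finset.Icc 1 (n + 1) = insert 1 (Finset.Icc 2 (n + 1)) := by
      ext x; simp only [Finset.mem_Icc, Finset.mem_insert]; omega
    rw [hsplit, Finset.sum_insert (by simp)]
    have h2 : ∑ m ∈ Finset.Icc 2 (n + 1),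
        ∑' k : ℕ, (if m = 1 then b k else a (m - 1) k) * H m (k + 1) i j
        = ∑ m ∈ Finset.Icc 1 n, ∑' k : ℕ, a m k * H (m + 1) (k + 1) i j := by
      rw [show Finset.Icc 2 (n + 1) = (Finset.Icc 1 n).image (· + 1) from by
        ext x
        simp only [Finset.mem_Icc, Finset.mem_image]
        constructor
        · intro hx; exact ⟨x - 1, by omega, by omega⟩
        · rintro ⟨y, hy, rfl⟩; omega]
      rw [Finset.sum_image (by intro x _ y _ hxy; exact Nat.succ_injective hxy)]
      refine Finset.sum_congr rfl fun m hm => ?_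
      have hm1 : m + 1 ≠ 1 := by have := (Finset.mem_Icc.1 hm).1; omega
      simp [hm1, show m ≠ 0 by have := (Finset.mem_Icc.1 hm).1; omega]
    rw [h2]
    simp only [if_pos rfl, if_true]
    linarith [hb']
end

section
/- For the simple walk, the function v₃ : ℤ² → ℝ defined for i,j ≥ 0 by v₃(i,j) = (i+1)(j+1)(317 + 16i³ + 4i⁴ + 168j + 100j² + 16j³ + 4j⁴ + 8i(21 + 4j + 2j²) + 4i²(25 + 4j + 2j²)) and v₃(i,j) = 0 otherwise, satisfies Δ²v₃ = 96·v₁, where v₁(i,j) = (i+1)(j+1) on the quadrant (extended by zero); in particular Δ³v₃ = 0 and Δ²v₃ ≠ 0, so v₃ is discrete polyharmonic of order exactly 3. -/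
/-- The discrete Laplacian of the simple walk (steps `(±1,0)`, `(0,±1)`, weight `1/4` each),
defined to be `0` outside the quarter plane. -/
noncomputable def swLap (h : ℤ → ℤ → ℝ) : ℤ → ℤ → ℝ :=
  fun i j =>
    if 0 ≤ i ∧ 0 ≤ j then
      (h (i + 1) j + h (i - 1) j + h i (j + 1) + h i (j - 1)) / 4 - h i j
    else 0

/-- The polynomial giving `v₃` inside the quarter plane. -/
def swP (x y : ℝ) : ℝ :=
  (x + 1) * (y + 1) *
    (317 + 16 * x ^ 3 + 4 * x ^ 4 + 168 * y + 100 * y ^ 2 + 16 * y ^ 3 + 4 * y ^ 4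
      + 8 * x * (21 + 4 * y + 2 * y ^ 2) + 4 * x ^ 2 * (25 + 4 * y + 2 * y ^ 2))

/-- The polynomial giving `Δv₃` inside the quarter plane. -/
def swQ (x y : ℝ) : ℝ :=
  (x + 1) * (y + 1) * (288 + 64 * x + 32 * x ^ 2 + 64 * y + 32 * y ^ 2)

/-- The polynomial giving `Δ²v₃` inside the quarter plane. -/
def swR (x y : ℝ) : ℝ := 96 * ((x + 1) * (y + 1))

/-- If `f` is given by a polynomial `F` on the quadrant (and `0` outside), and `F` vanishes
on the lines `x = -1` and `y = -1`, then `swLap f` is given on the quadrant by the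
polynomial Laplacian of `F`. -/
lemma swLap_step (f : ℤ → ℤ → ℝ) (F : ℝ → ℝ → ℝ)
    (hf : ∀ i j : ℤ, f i j = if 0 ≤ i ∧ 0 ≤ j then F (i : ℝ) (j : ℝ) else 0)
    (h1 : ∀ y : ℝ, F (-1) y = 0) (h2 : ∀ x : ℝ, F x (-1) = 0) :
    ∀ i j : ℤ, swLap f i j =
      if 0 ≤ i ∧ 0 ≤ j then
        (F ((i : ℝ) + 1) (j : ℝ) + F ((i : ℝ) - 1) (j : ℝ) + F (i : ℝ) ((j : ℝ) + 1)
          + F (i : ℝ) ((j : ℝ) - 1)) / 4 - F (i : ℝ) (j : ℝ)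
      else 0 := by
  intro i j
  unfold swLap
  split_ifs with h
  · obtain ⟨hi, hj⟩ := h
    have e1 : f (i + 1) j = F ((i : ℝ) + 1) (j : ℝ) := by
      rw [hf, if_pos ⟨by omega, hj⟩]; push_cast; ring_nf
    have e2 : f (i - 1) j = F ((i : ℝ) - 1) (j : ℝ) := by
      by_cases hi1 : 1 ≤ i
      · rw [hf, if_pos ⟨by omega, hj⟩]; push_cast; ring_nf
      · have hi0 : i = 0 := by omega
        subst hi0
        rw [hf, if_neg (by omega)]
        norm_num [h1]
    have e3 : f i (j + 1) = F (i : ℝ) ((j : ℝ) + 1) := by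
      rw [hf, if_pos ⟨hi, by omega⟩]; push_cast; ring_nf
    have e4 : f i (j - 1) = F (i : ℝ) ((j : ℝ) - 1) := by
      by_cases hj1 : 1 ≤ j
      · rw [hf, if_pos ⟨hi, by omega⟩]; push_cast; ring_nf
      · have hj0 : j = 0 := by omega
        subst hj0
        rw [hf, if_neg (by omega)]
        norm_num [h2]
    have e5 : f i j = F (i : ℝ) (j : ℝ) := by rw [hf, if_pos ⟨hi, hj⟩]
    rw [e1, e2, e3, e4, e5]
  · rfl

/-- For the simple walk, the third asymptotic coefficient
`v₃(i,j) = (i+1)(j+1)(317 + 16i³ + 4i⁴ + 168j + 100j² + 16j³ + 4j⁴ + 8i(21 + 4j + 2j²)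
+ 4i²(25 + 4j + 2j²))` on the quarter plane (extended by `0`) satisfies `Δ²v₃ = 96·v₁` with
`v₁(i,j) = (i+1)(j+1)`; in particular `Δ³v₃ = 0` and `Δ²v₃ ≠ 0`, i.e. `v₃` is discrete
polyharmonic of order exactly `3`. -/
theorem simple_walk_v3_triharmonic
    (v₁ v₃ : ℤ → ℤ → ℝ)
    (hv₁ : ∀ i j : ℤ, v₁ i j = if 0 ≤ i ∧ 0 ≤ j then ((i : ℝ) + 1) * ((j : ℝ) + 1) else 0)
    (hv₃ : ∀ i j : ℤ, v₃ i j =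
      if 0 ≤ i ∧ 0 ≤ j then
        ((i : ℝ) + 1) * ((j : ℝ) + 1) *
          (317 + 16 * (i : ℝ) ^ 3 + 4 * (i : ℝ) ^ 4 + 168 * (j : ℝ) + 100 * (j : ℝ) ^ 2
            + 16 * (j : ℝ) ^ 3 + 4 * (j : ℝ) ^ 4
            + 8 * (i : ℝ) * (21 + 4 * (j : ℝ) + 2 * (j : ℝ) ^ 2)
            + 4 * (i : ℝ) ^ 2 * (25 + 4 * (j : ℝ) + 2 * (j : ℝ) ^ 2))
      else 0) :
    (swLap (swLap v₃) = fun i j => 96 * v₁ i j) ∧ swLap (swLap (swLap v₃)) = 0 ∧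
      swLap (swLap v₃) ≠ 0 := by
  have hfP : ∀ i j : ℤ, v₃ i j = if 0 ≤ i ∧ 0 ≤ j then swP (i : ℝ) (j : ℝ) else 0 := by
    intro i j; rw [hv₃]; simp only [swP]
  -- first Laplacian
  have hA : ∀ i j : ℤ, swLap v₃ i j = if 0 ≤ i ∧ 0 ≤ j then swQ (i : ℝ) (j : ℝ) else 0 := by
    intro i j
    rw [swLap_step v₃ swP hfP (fun y => by simp only [swP]; ring)
      (fun x => by simp only [swP]; ring) i j]
    split_ifs with h
    · simp only [swP, swQ]; ring
    · rfl
  -- second Laplacian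
  have hB : ∀ i j : ℤ, swLap (swLap v₃) i j =
      if 0 ≤ i ∧ 0 ≤ j then swR (i : ℝ) (j : ℝ) else 0 := by
    intro i j
    rw [swLap_step (swLap v₃) swQ hA (fun y => by simp only [swQ]; ring)
      (fun x => by simp only [swQ]; ring) i j]
    split_ifs with h
    · simp only [swQ, swR]; ring
    · rfl
  have h96 : swLap (swLap v₃) = fun i j => 96 * v₁ i j := by
    funext i j
    rw [hB, hv₁]
    split_ifs with h
    · simp only [swR]
    · simp
  refine ⟨h96, ?_, ?_⟩
  · -- third Laplacian vanishes
    have hfR : ∀ i j : ℤ, swLap (swLap v₃) i j =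
        if 0 ≤ i ∧ 0 ≤ j then swR (i : ℝ) (j : ℝ) else 0 := hB
    funext i j
    rw [Pi.zero_apply, Pi.zero_apply,
      swLap_step (swLap (swLap v₃)) swR hfR (fun y => by simp only [swR]; ring)
        (fun x => by simp only [swR]; ring) i j]
    split_ifs with h
    · simp only [swR]; ring
    · rfl
  · -- nonvanishing at (0,0)
    intro hcontra
    have h00 := congrFun (congrFun hcontra 0) 0
    rw [hB 0 0, if_pos ⟨le_refl 0, le_refl 0⟩] at h00
    simp only [swR, Int.cast_zero, Pi.zero_apply] at h00
    norm_num at h00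
end

section
/- For the simple walk, the function g : ℤ² → ℝ defined by g(i,j) = (i+1)·j(j+1)(j+2) for i,j ≥ 0 and g(i,j) = 0 otherwise (the coefficient function of the generating function H₂¹ = −32y/((x−1)²(y−1)⁴) up to a nonzero scalar), satisfies Δg = (3/2)·v₁, where v₁(i,j) = (i+1)(j+1) on the quadrant (extended by zero). In particular Δ²g = 0, i.e. g is discrete biharmonic. -/
/-- For the simple walk, `g(i,j) = (i+1)·j(j+1)(j+2)` on the quarter plane (extended by `0`),
the coefficient function of the generating function `H₂¹ = −32y/((x−1)²(y−1)⁴)` up to a nonzero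
scalar, satisfies `Δg = (3/2)·v₁` with `v₁(i,j) = (i+1)(j+1)`; in particular `Δ²g = 0`,
i.e. `g` is discrete biharmonic. -/
theorem simple_walk_g_biharmonic
    (v₁ g : ℤ → ℤ → ℝ)
    (hv₁ : ∀ i j : ℤ, v₁ i j = if 0 ≤ i ∧ 0 ≤ j then ((i : ℝ) + 1) * ((j : ℝ) + 1) else 0)
    (hg : ∀ i j : ℤ, g i j =
      if 0 ≤ i ∧ 0 ≤ j then ((i : ℝ) + 1) * ((j : ℝ) * ((j : ℝ) + 1) * ((j : ℝ) + 2))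
      else 0) :
    (swLap g = fun i j => (3 / 2) * v₁ i j) ∧ swLap (swLap g) = 0 := by
  -- Extended formulas valid for all `i ≥ -1`, `j ≥ -1` (both sides vanish on the lines
  -- `i = -1` and `j = -1`).
  have hg' : ∀ i j : ℤ, -1 ≤ i → -1 ≤ j →
      g i j = ((i : ℝ) + 1) * ((j : ℝ) * ((j : ℝ) + 1) * ((j : ℝ) + 2)) := by
    intro i j hi hj
    rw [hg]
    rcases lt_or_ge i 0 with hi0 | hi0
    · have : i = -1 := by omega
      subst this
      norm_num
    rcases lt_or_ge j 0 with hj0 | hj0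
    · have : j = -1 := by omega
      subst this
      norm_num
    simp [hi0, hj0]
  have hv' : ∀ i j : ℤ, -1 ≤ i → -1 ≤ j →
      v₁ i j = ((i : ℝ) + 1) * ((j : ℝ) + 1) := by
    intro i j hi hj
    rw [hv₁]
    rcases lt_or_ge i 0 with hi0 | hi0
    · have : i = -1 := by omega
      subst this
      norm_num
    rcases lt_or_ge j 0 with hj0 | hj0
    · have : j = -1 := by omega
      subst this
      norm_num
    simp [hi0, hj0]
  have h1 : swLap g = fun i j => (3 / 2) * v₁ i j := by
    funext i j
    simp only [swLap]
    by_cases h : 0 ≤ i ∧ 0 ≤ j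
    · obtain ⟨hi, hj⟩ := h
      rw [if_pos ⟨hi, hj⟩,
        hg' (i+1) j (by omega) (by omega), hg' (i-1) j (by omega) (by omega),
        hg' i (j+1) (by omega) (by omega), hg' i (j-1) (by omega) (by omega),
        hg' i j (by omega) (by omega), hv' i j (by omega) (by omega)]
      push_cast
      ring
    · rw [if_neg h, hv₁]
      rw [if_neg h]
      ring
  refine ⟨h1, ?_⟩
  rw [h1]
  funext i j
  simp only [swLap, Pi.zero_apply]
  by_cases h : 0 ≤ i ∧ 0 ≤ j
  · obtain ⟨hi, hj⟩ := h
    rw [if_pos ⟨hi, hj⟩,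
      hv' (i+1) j (by omega) (by omega), hv' (i-1) j (by omega) (by omega),
      hv' i (j+1) (by omega) (by omega), hv' i (j-1) (by omega) (by omega),
      hv' i j (by omega) (by omega)]
    push_cast
    ring
  · rw [if_neg h]
end

section
/- For the simple walk, the function w : ℤ² → ℝ defined by w(i,j) = (i+1)·(j−1)j(j+1)(j+2)(j+3) for i,j ≥ 0 and w(i,j) = 0 otherwise (the coefficient function of the generating function H₃¹ = −128y²/((x−1)²(y−1)⁶) up to a nonzero scalar), satisfies Δw = 5·g, where g(i,j) = (i+1)·j(j+1)(j+2) on the quadrant (extended by zero). In particular Δ³w = 0, i.e. w is discrete polyharmonic of order 3. -/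
/-- For the simple walk, `w(i,j) = (i+1)·(j−1)j(j+1)(j+2)(j+3)` on the quarter plane
(extended by `0`), the coefficient function of the generating function
`H₃¹ = −128y²/((x−1)²(y−1)⁶)` up to a nonzero scalar, satisfies `Δw = 5·g` with
`g(i,j) = (i+1)·j(j+1)(j+2)`; in particular `Δ³w = 0`, i.e. `w` is discrete polyharmonic
of order `3`. -/
theorem simple_walk_w_triharmonic
    (g w : ℤ → ℤ → ℝ)
    (hg : ∀ i j : ℤ, g i j =
      if 0 ≤ i ∧ 0 ≤ j then ((i : ℝ) + 1) * ((j : ℝ) * ((j : ℝ) + 1) * ((j : ℝ) + 2))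
      else 0)
    (hw : ∀ i j : ℤ, w i j =
      if 0 ≤ i ∧ 0 ≤ j then
        ((i : ℝ) + 1) *
          (((j : ℝ) - 1) * (j : ℝ) * ((j : ℝ) + 1) * ((j : ℝ) + 2) * ((j : ℝ) + 3))
      else 0) :
    (swLap w = fun i j => 5 * g i j) ∧ swLap (swLap (swLap w)) = 0 := by
  -- extended formulas valid down to -1
  have hw' : ∀ i j : ℤ, -1 ≤ i → -1 ≤ j → w i j =
      ((i : ℝ) + 1) *
        (((j : ℝ) - 1) * (j : ℝ) * ((j : ℝ) + 1) * ((j : ℝ) + 2) * ((j : ℝ) + 3)) := by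
    intro i j hi hj
    rw [hw]
    split_ifs with h
    · rfl
    · rcases not_and_or.mp h with h' | h'
      · have : i = -1 := by omega
        subst this; push_cast; ring
      · have : j = -1 := by omega
        subst this; push_cast; ring
  have hg' : ∀ i j : ℤ, -1 ≤ i → -1 ≤ j → g i j =
      ((i : ℝ) + 1) * ((j : ℝ) * ((j : ℝ) + 1) * ((j : ℝ) + 2)) := by
    intro i j hi hj
    rw [hg]
    split_ifs with h
    · rfl
    · rcases not_and_or.mp h with h' | h'
      · have : i = -1 := by omega
        subst this; push_cast; ring
      · have : j = -1 := by omega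
        subst this; push_cast; ring
  have h1 : swLap w = fun i j => 5 * g i j := by
    funext i j
    simp only [swLap]
    split_ifs with h
    · obtain ⟨hi, hj⟩ := h
      rw [hw' (i+1) j (by omega) (by omega), hw' (i-1) j (by omega) (by omega),
        hw' i (j+1) (by omega) (by omega), hw' i (j-1) (by omega) (by omega),
        hw' i j (by omega) (by omega), hg' i j (by omega) (by omega)]
      push_cast
      ring
    · rw [hg i j, if_neg h]
      ring
  have h2 : swLap (fun i j => 5 * g i j) =
      (fun i j => if 0 ≤ i ∧ 0 ≤ j then (15/2 : ℝ) * ((i : ℝ) + 1) * ((j : ℝ) + 1) else 0 :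
        ℤ → ℤ → ℝ) := by
    funext i j
    simp only [swLap]
    split_ifs with h
    · obtain ⟨hi, hj⟩ := h
      rw [hg' (i+1) j (by omega) (by omega), hg' (i-1) j (by omega) (by omega),
        hg' i (j+1) (by omega) (by omega), hg' i (j-1) (by omega) (by omega),
        hg' i j (by omega) (by omega)]
      push_cast
      ring
    · rfl
  have hf' : ∀ i j : ℤ, -1 ≤ i → -1 ≤ j →
      (if 0 ≤ i ∧ 0 ≤ j then (15/2 : ℝ) * ((i : ℝ) + 1) * ((j : ℝ) + 1) else 0) =
        (15/2 : ℝ) * ((i : ℝ) + 1) * ((j : ℝ) + 1) := by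
    intro i j hi hj
    split_ifs with h
    · rfl
    · rcases not_and_or.mp h with h' | h'
      · have : i = -1 := by omega
        subst this; push_cast; ring
      · have : j = -1 := by omega
        subst this; push_cast; ring
  have h3 : swLap ((fun i j => if 0 ≤ i ∧ 0 ≤ j then
      (15/2 : ℝ) * ((i : ℝ) + 1) * ((j : ℝ) + 1) else 0 : ℤ → ℤ → ℝ)) = 0 := by
    funext i j
    simp only [swLap, Pi.zero_apply]
    by_cases h : 0 ≤ i ∧ 0 ≤ j
    · obtain ⟨hi, hj⟩ := h
      rw [if_pos ⟨hi, hj⟩, hf' (i+1) j (by omega) (by omega), hf' (i-1) j (by omega) (by omega),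
        hf' i (j+1) (by omega) (by omega), hf' i (j-1) (by omega) (by omega),
        hf' i j (by omega) (by omega)]
      push_cast
      ring
    · rw [if_neg h]
  refine ⟨h1, ?_⟩
  rw [h1, h2, h3]
end

section
/- For the tandem walk (step set {(1,0),(0,−1),(−1,1)}, each step with weight 1/3), the function h : ℤ² → ℝ defined by h(i,j) = (i+1)(j+1)(i+j+2) for i,j ≥ 0 and h(i,j) = 0 otherwise, is discrete harmonic: (Δh)(i,j) = 0 for all i,j ≥ 0. -/
/-- The discrete Laplacian of the tandem walk (steps `(1,0)`, `(0,−1)`, `(−1,1)`,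
weight `1/3` each), defined to be `0` outside the quarter plane. -/
noncomputable def tandemLap (h : ℤ → ℤ → ℝ) : ℤ → ℤ → ℝ :=
  fun i j =>
    if 0 ≤ i ∧ 0 ≤ j then
      (h (i + 1) j + h i (j - 1) + h (i - 1) (j + 1)) / 3 - h i j
    else 0

/-- For the tandem walk, `h(i,j) = (i+1)(j+1)(i+j+2)` on the quarter plane (extended by `0`)
is discrete harmonic. -/
theorem tandem_walk_harmonic
    (h : ℤ → ℤ → ℝ)
    (hh : ∀ i j : ℤ, h i j =
      if 0 ≤ i ∧ 0 ≤ j then ((i : ℝ) + 1) * ((j : ℝ) + 1) * ((i : ℝ) + (j : ℝ) + 2)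
      else 0) :
    ∀ i j : ℤ, 0 ≤ i → 0 ≤ j → tandemLap h i j = 0 := by

  intro i j hi hj
  have e1 : h (i+1) j = ((i:ℝ)+2)*((j:ℝ)+1)*((i:ℝ)+(j:ℝ)+3) := by
    rw [hh]
    have h1 : (0:ℤ) ≤ i+1 := by omega
    simp only [h1, hj, and_self, if_true]
    push_cast; ring
  have e2 : h i (j-1) = ((i:ℝ)+1)*(j:ℝ)*((i:ℝ)+(j:ℝ)+1) := by
    rw [hh]
    rcases eq_or_lt_of_le hj with h0 | h0
    · subst h0; norm_num
    · have h1 : (0:ℤ) ≤ j-1 := by omega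
      simp only [hi, h1, and_self, if_true]
      push_cast; ring
  have e3 : h (i-1) (j+1) = (i:ℝ)*((j:ℝ)+2)*((i:ℝ)+(j:ℝ)+2) := by
    rw [hh]
    rcases eq_or_lt_of_le hi with h0 | h0
    · subst h0; norm_num
    · have h1 : (0:ℤ) ≤ i-1 := by omega
      have h2 : (0:ℤ) ≤ j+1 := by omega
      simp only [h1, h2, and_self, if_true]
      push_cast; ring
  have e0 : h i j = ((i:ℝ)+1)*((j:ℝ)+1)*((i:ℝ)+(j:ℝ)+2) := by
    rw [hh]; simp [hi, hj]
  simp only [tandemLap, hi, hj, and_self, if_true, e0, e1, e2, e3]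
  ring
end

section
/- Let S ⊆ {-1,0,1}² be a step set with nonnegative weights p_{u,v} summing to 1 and zero drift, with second moments σ₁₁, σ₁₂, σ₂₂ satisfying σ₁₁ > 0 and δ := σ₁₁σ₂₂ − σ₁₂² > 0, and with ã(1) = Σ_v p_{−1,v} > 0. Write the kernel as K(x,y) = ã(y)x² + b̃(y)x + c̃(y), a quadratic polynomial in x. Set c₊ = (−σ₁₂ + i√δ)/σ₁₁ and c₋ = (−σ₁₂ − i√δ)/σ₁₁ in ℂ. Then for every real y there exist ε > 0, C > 0, and functions r₊, r₋ : (0,ε) → ℂ such that for every μ ∈ (0,ε): r₊(μ) and r₋(μ) are precisely the two complex roots (with multiplicity) of the quadratic equation ã(e^{−μy})X² + b̃(e^{−μy})X + c̃(e^{−μy}) = 0, and |r₊(μ) − 1 + c₊·μ·y| ≤ Cμ² and |r₋(μ) − 1 + c₋·μ·y| ≤ Cμ². In other words, the roots X_±(e^{−μy}) of K(·, e^{−μy}) satisfy X_±(e^{−μy}) = 1 − c_± μy + O(μ²) as μ → 0⁺. -/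
set_option maxHeartbeats 1000000


open Finset

/-- `ã(y) = Σ_v p (−1) v · y^{1−v}`, the coefficient of `x²` in the kernel `K(x,y)`. -/
noncomputable def coefA (p : ℤ → ℤ → ℝ) : ℝ → ℝ :=
  fun y => ∑ v ∈ ({-1, 0, 1} : Finset ℤ), p (-1) v * y ^ (1 - v).toNat

/-- `b̃(y) = Σ_v p 0 v · y^{1−v} − y`, the coefficient of `x` in the kernel `K(x,y)`. -/
noncomputable def coefB (p : ℤ → ℤ → ℝ) : ℝ → ℝ :=
  fun y => (∑ v ∈ ({-1, 0, 1} : Finset ℤ), p 0 v * y ^ (1 - v).toNat) - y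

/-- `c̃(y) = Σ_v p 1 v · y^{1−v}`, the constant coefficient (in `x`) of the kernel `K(x,y)`. -/
noncomputable def coefC (p : ℤ → ℤ → ℝ) : ℝ → ℝ :=
  fun y => ∑ v ∈ ({-1, 0, 1} : Finset ℤ), p 1 v * y ^ (1 - v).toNat

section KREAux
open Filter Asymptotics

lemma kre_exp2 {x : ℝ} (hx : |x| ≤ 1) : |Real.exp x - 1 - x| ≤ x^2 := by
  have h := Real.exp_bound hx (n := 2) (by norm_num)
  have hs : ∑ m ∈ Finset.range 2, x ^ m / m.factorial = 1 + x := by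
    simp [Finset.sum_range_succ]
  rw [hs] at h
  norm_num [Nat.factorial] at h
  have h1 : |Real.exp x - 1 - x| = |Real.exp x - (1+x)| := by ring_nf
  rw [h1]
  nlinarith [sq_abs x, sq_nonneg x, h]

lemma kre_exp3 {x : ℝ} (hx : |x| ≤ 1) : |Real.exp x - 1 - x - x^2/2| ≤ |x|^3 := by
  have h := Real.exp_bound hx (n := 3) (by norm_num)
  have hs : ∑ m ∈ Finset.range 3, x ^ m / m.factorial = 1 + x + x^2/2 := by
    rw [Finset.sum_range_succ, Finset.sum_range_succ, Finset.sum_range_succ]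
    norm_num [Nat.factorial]
  rw [hs] at h
  norm_num [Nat.factorial] at h
  have h1 : |Real.exp x - 1 - x - x^2/2| = |Real.exp x - (1+x+x^2/2)| := by ring_nf
  rw [h1]
  nlinarith [pow_nonneg (abs_nonneg x) 3, h]


lemma kre_small (c : ℝ) : ∀ᶠ μ : ℝ in nhds 0, |c * μ| ≤ 1 := by
  have h : Tendsto (fun μ : ℝ => |c * μ|) (nhds 0) (nhds |c * 0|) := by
    apply (continuous_abs.comp (continuous_const.mul continuous_id)).tendsto
  simp only [mul_zero, abs_zero] at h
  exact h.eventually_le_const (by norm_num)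

lemma kre_expO2 (c : ℝ) :
    (fun μ : ℝ => Real.exp (c*μ) - 1 - c*μ) =O[nhds 0] (fun μ => μ^2) := by
  rw [isBigO_iff]
  refine ⟨c^2, ?_⟩
  filter_upwards [kre_small c] with μ hμ
  have h := kre_exp2 hμ
  rw [Real.norm_eq_abs, Real.norm_eq_abs]
  calc |Real.exp (c*μ) - 1 - c*μ| ≤ (c*μ)^2 := h
    _ = c^2 * |μ^2| := by rw [abs_of_nonneg (sq_nonneg μ)]; ring

lemma kre_expO3 (c : ℝ) :
    (fun μ : ℝ => Real.exp (c*μ) - 1 - c*μ - c^2*μ^2/2) =O[nhds 0] (fun μ => μ^3) := by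
  rw [isBigO_iff]
  refine ⟨|c|^3, ?_⟩
  filter_upwards [kre_small c] with μ hμ
  have h := kre_exp3 hμ
  rw [Real.norm_eq_abs, Real.norm_eq_abs]
  have h1 : Real.exp (c*μ) - 1 - c*μ - c^2*μ^2/2 = Real.exp (c*μ) - 1 - c*μ - (c*μ)^2/2 := by ring
  rw [h1]
  calc |Real.exp (c*μ) - 1 - c*μ - (c*μ)^2/2| ≤ |c*μ|^3 := h
    _ = |c|^3 * |μ^3| := by rw [abs_mul, mul_pow, abs_pow μ 3]

lemma kre_powO {m n : ℕ} (h : n ≤ m) : (fun μ : ℝ => μ^m) =O[nhds 0] (fun μ => μ^n) := by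
  rw [isBigO_iff]
  refine ⟨1, ?_⟩
  have hev : ∀ᶠ μ : ℝ in nhds 0, |μ| ≤ 1 := by
    have h' : Tendsto (fun μ : ℝ => |μ|) (nhds 0) (nhds |(0:ℝ)|) := continuous_abs.tendsto 0
    simp only [abs_zero] at h'
    exact h'.eventually_le_const (by norm_num)
  filter_upwards [hev] with μ hμ
  rw [Real.norm_eq_abs, Real.norm_eq_abs, abs_pow, abs_pow, one_mul]
  exact pow_le_pow_of_le_one (abs_nonneg μ) hμ h

lemma kre_sqrt_sub_le {a b : ℝ} (hb : 0 < b) :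
    |Real.sqrt a - Real.sqrt b| ≤ |a - b| / Real.sqrt b := by
  have hsb : 0 < Real.sqrt b := Real.sqrt_pos.2 hb
  rw [le_div_iff₀ hsb]
  rcases le_or_gt 0 a with ha | ha
  · have h1 : Real.sqrt a ^ 2 = a := Real.sq_sqrt ha
    have h2 : Real.sqrt b ^ 2 = b := Real.sq_sqrt hb.le
    have hsa : 0 ≤ Real.sqrt a := Real.sqrt_nonneg a
    rcases abs_cases (Real.sqrt a - Real.sqrt b) with ⟨he, _⟩ | ⟨he, _⟩ <;>
      rcases abs_cases (a - b) with ⟨hf, _⟩ | ⟨hf, _⟩ <;> rw [he, hf] <;> nlinarith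
  · rw [Real.sqrt_eq_zero_of_nonpos ha.le]
    rcases abs_cases (0 - Real.sqrt b) with ⟨he, _⟩ | ⟨he, _⟩ <;>
      rcases abs_cases (a - b) with ⟨hf, _⟩ | ⟨hf, _⟩ <;> rw [he, hf] <;> nlinarith [Real.sq_sqrt hb.le]

lemma kre_expand3 (y a2 a1 a0 : ℝ) :
    (fun μ : ℝ => (a2*Real.exp (-μ*y)^2 + a1*Real.exp (-μ*y) + a0)
      - ((a0+a1+a2) - y*(a1+2*a2)*μ + y^2*(a1+4*a2)/2*μ^2)) =O[nhds 0]
      (fun μ => μ^3) := by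
  have ht2 : ∀ μ : ℝ, Real.exp (-μ*y)^2 = Real.exp ((-2*y)*μ) := by
    intro μ; rw [sq, ← Real.exp_add]; congr 1; ring
  have ht1 : ∀ μ : ℝ, Real.exp (-μ*y) = Real.exp ((-y)*μ) := by
    intro μ; congr 1; ring
  have h := ((kre_expO3 (-2*y)).const_mul_left a2).add ((kre_expO3 (-y)).const_mul_left a1)
  refine h.congr_left fun μ => ?_
  rw [ht2 μ, ht1 μ]
  ring

lemma kre_powO1 {m : ℕ} (h : 1 ≤ m) : (fun μ : ℝ => μ^m) =O[nhds 0] (fun μ : ℝ => μ) :=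
  (kre_powO h).congr_right fun μ => pow_one μ

lemma kre_polyO1 (b c : ℝ) :
    (fun μ : ℝ => b*μ + c*μ^2) =O[nhds 0] (fun μ : ℝ => μ) := by
  have h := ((isBigO_refl (fun μ : ℝ => μ) (nhds 0)).const_mul_left b).add
    ((kre_powO1 (show 1 ≤ 2 by norm_num)).const_mul_left c)
  exact h.congr_left fun μ => by ring

lemma kre_combine (y α Ka Kb Kc La Lb Lc σ₁₂ δ : ℝ) (A B C : ℝ → ℝ)
    (hA3 : (fun μ => A μ - (α - y*Ka*μ + y^2*La/2*μ^2)) =O[nhds (0:ℝ)] fun μ => μ^3)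
    (hB3 : (fun μ => B μ - (-2*α - y*Kb*μ + y^2*Lb/2*μ^2)) =O[nhds (0:ℝ)] fun μ => μ^3)
    (hC3 : (fun μ => C μ - (α - y*Kc*μ + y^2*Lc/2*μ^2)) =O[nhds (0:ℝ)] fun μ => μ^3)
    (hKb : Kb = -(Ka+Kc))
    (hσ₁₂ : σ₁₂ = Ka - Kc)
    (hδ : δ = 2*α*(La+Lb+Lc) - σ₁₂^2) :
    ((fun μ => A μ - α) =O[nhds (0:ℝ)] fun μ => μ) ∧
    ((fun μ => (-B μ - 2*A μ) - σ₁₂*y*μ) =O[nhds (0:ℝ)] fun μ => μ^2) ∧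
    ((fun μ => (4*A μ*C μ - B μ^2) - δ*y^2*μ^2) =O[nhds (0:ℝ)] fun μ => μ^3) := by
  subst hσ₁₂ hδ hKb
  have hA1 : (fun μ => A μ - α) =O[nhds (0:ℝ)] fun μ => μ := by
    have h := (hA3.trans (kre_powO1 (show 1 ≤ 3 by norm_num))).add
      (kre_polyO1 (-(y*Ka)) (y^2*La/2))
    exact h.congr_left fun μ => by ring
  have hB1 : (fun μ => B μ - (-2*α)) =O[nhds (0:ℝ)] fun μ => μ := by
    have h := (hB3.trans (kre_powO1 (show 1 ≤ 3 by norm_num))).add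
      (kre_polyO1 (-(y*(-(Ka+Kc)))) (y^2*Lb/2))
    exact h.congr_left fun μ => by ring
  have hC1 : (fun μ => C μ - α) =O[nhds (0:ℝ)] fun μ => μ := by
    have h := (hC3.trans (kre_powO1 (show 1 ≤ 3 by norm_num))).add
      (kre_polyO1 (-(y*Kc)) (y^2*Lc/2))
    exact h.congr_left fun μ => by ring
  have hμ0 : Tendsto (fun μ : ℝ => μ) (nhds (0:ℝ)) (nhds 0) := by
    exact tendsto_id
  have tendsto_of_O1 : ∀ (F : ℝ → ℝ) (c : ℝ),
      ((fun μ => F μ - c) =O[nhds (0:ℝ)] fun μ => μ) → Tendsto F (nhds 0) (nhds c) := by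
    intro F c h
    have h0 : Tendsto (fun μ => F μ - c) (nhds 0) (nhds 0) := h.trans_tendsto hμ0
    have := h0.add_const c
    simpa using this
  have hBt := tendsto_of_O1 B (-2*α) hB1
  have hCt := tendsto_of_O1 C α hC1
  have hCO1 : C =O[nhds (0:ℝ)] (fun _ => (1:ℝ)) := hCt.isBigO_one ℝ
  refine ⟨hA1, ?_, ?_⟩
  · have hA2 : (fun μ => A μ - (α - y*Ka*μ + y^2*La/2*μ^2)) =O[nhds (0:ℝ)] fun μ => μ^2 :=
      hA3.trans (kre_powO (show 2 ≤ 3 by norm_num))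
    have hB2 : (fun μ => B μ - (-2*α - y*(-(Ka+Kc))*μ + y^2*Lb/2*μ^2)) =O[nhds (0:ℝ)]
        fun μ => μ^2 := hB3.trans (kre_powO (show 2 ≤ 3 by norm_num))
    have hq : (fun μ : ℝ => (-(y^2*(Lb/2 + La)))*μ^2) =O[nhds (0:ℝ)] fun μ => μ^2 :=
      (isBigO_refl _ _).const_mul_left _
    have h := (hB2.neg_left.sub (hA2.const_mul_left 2)).add hq
    exact h.congr_left fun μ => by ring
  · have hcPA : Continuous (fun μ : ℝ => α - y*Ka*μ + y^2*La/2*μ^2) := by fun_prop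
    have hcPB : Continuous (fun μ : ℝ => -2*α - y*(-(Ka+Kc))*μ + y^2*Lb/2*μ^2) := by fun_prop
    have hPAt := hcPA.tendsto 0
    have hPBt := hcPB.tendsto 0
    have hPAO1 : (fun μ : ℝ => α - y*Ka*μ + y^2*La/2*μ^2) =O[nhds (0:ℝ)]
        (fun _ => (1:ℝ)) := hPAt.isBigO_one ℝ
    have hBPB : (fun μ => B μ + (-2*α - y*(-(Ka+Kc))*μ + y^2*Lb/2*μ^2)) =O[nhds (0:ℝ)]
        (fun _ => (1:ℝ)) := (hBt.isBigO_one ℝ).add (hPBt.isBigO_one ℝ)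
    have t1 := ((hA3.mul hCO1).const_mul_left 4).congr_right (g₂ := fun μ => μ^3)
      fun μ => by ring
    have t2 := ((hPAO1.mul hC3).const_mul_left 4).congr_right (g₂ := fun μ => μ^3)
      fun μ => by ring
    have t3 := (hB3.mul hBPB).congr_right (g₂ := fun μ => μ^3) fun μ => by ring
    have hqc : Continuous (fun μ : ℝ => y^3*((-(Ka+Kc))*Lb - 2*Ka*Lc - 2*La*Kc)
        + μ*(y^4*(La*Lc - Lb^2/4))) := by fun_prop
    have t4 := ((isBigO_refl (fun μ : ℝ => μ^3) (nhds 0)).mul ((hqc.tendsto 0).isBigO_one ℝ)).congr_right (g₂ := fun μ => μ^3) fun μ => by ring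
    have h := (((t1.add t2).sub t3).add t4)
    refine h.congr (fun μ => by ring) (fun μ => by ring)

lemma kre_main (y σ₁₁ σ₁₂ δ α : ℝ) (A B C : ℝ → ℝ) (cp cm : ℂ)
    (hy : y ≠ 0) (hα : 0 < α) (hδpos : 0 < δ) (hσ : σ₁₁ = 2*α)
    (hcp : cp = (-(σ₁₂:ℂ) + Complex.I * Real.sqrt δ)/(σ₁₁:ℂ))
    (hcm : cm = (-(σ₁₂:ℂ) - Complex.I * Real.sqrt δ)/(σ₁₁:ℂ))
    (hAx : (fun μ => A μ - α) =O[nhds (0:ℝ)] fun μ => μ)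
    (hNx : (fun μ => (-B μ - 2*A μ) - σ₁₂*y*μ) =O[nhds (0:ℝ)] fun μ => μ^2)
    (hDx : (fun μ => (4*A μ*C μ - B μ^2) - δ*y^2*μ^2) =O[nhds (0:ℝ)] fun μ => μ^3) :
    ∃ ε > (0:ℝ), ∃ K > (0:ℝ), ∃ rp rm : ℝ → ℂ,
      ∀ μ ∈ Set.Ioo (0:ℝ) ε,
        (∀ X : ℂ, (A μ : ℂ)*X^2 + (B μ : ℂ)*X + (C μ : ℂ)
            = (A μ : ℂ)*(X - rp μ)*(X - rm μ)) ∧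
        ‖rp μ - 1 + cp*(μ:ℂ)*(y:ℂ)‖ ≤ K*μ^2 ∧
        ‖rm μ - 1 + cm*(μ:ℂ)*(y:ℂ)‖ ≤ K*μ^2 := by
  set l := nhdsWithin (0:ℝ) (Set.Ioi 0) with hl
  obtain ⟨D, hD⟩ : ∃ D : ℝ → ℝ, D = fun μ => 4*A μ*C μ - B μ^2 := ⟨_, rfl⟩
  obtain ⟨sg, hsgdef⟩ : ∃ sg : ℝ, sg = if 0 < y then (1:ℝ) else -1 := ⟨_, rfl⟩
  have hsg2 : sg^2 = 1 := by rw [hsgdef]; split <;> norm_num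
  have hsgabs : sg * |y| = y := by
    rcases hy.lt_or_gt with h | h
    · rw [hsgdef, if_neg (not_lt.2 h.le), abs_of_neg h]; ring
    · rw [hsgdef, if_pos h, abs_of_pos h]; ring
  have hμpos : ∀ᶠ μ in l, 0 < μ := eventually_mem_nhdsWithin
  have hald : l ≤ nhds 0 := nhdsWithin_le_nhds
  have hAl : (fun μ => A μ - α) =O[l] fun μ => μ := hAx.mono hald
  have hμ0l : Tendsto (fun μ : ℝ => μ) l (nhds 0) := by
    have h : Tendsto (fun μ : ℝ => μ) (nhds (0:ℝ)) (nhds 0) := by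
      exact tendsto_id
    exact h.mono_left hald
  have hAt : Tendsto A l (nhds α) := by
    have h0 := hAl.trans_tendsto hμ0l
    simpa using h0.add_const α
  have hA2 : ∀ᶠ μ in l, α/2 ≤ A μ :=
    Filter.Tendsto.eventually_const_le (by linarith) hAt
  have hAinvO : (fun μ => (A μ)⁻¹) =O[l] (fun _ => (1:ℝ)) :=
    (hAt.inv₀ hα.ne').isBigO_one ℝ
  have h2AinvO : (fun μ => (2*A μ)⁻¹) =O[l] (fun _ => (1:ℝ)) := by
    have h2 : Tendsto (fun μ => 2*A μ) l (nhds (2*α)) := hAt.const_mul 2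
    exact (h2.inv₀ (by positivity)).isBigO_one ℝ
  have hDl : (fun μ => D μ - δ*y^2*μ^2) =O[l] fun μ => μ^3 := by
    rw [hD]; exact hDx.mono hald
  have hy2 : 0 < δ*y^2 := by
    have h1 : 0 < |y| := abs_pos.mpr hy
    have h2 : y^2 = |y| * |y| := by rw [← sq_abs]; ring
    nlinarith [mul_pos hδpos (mul_pos h1 h1)]
  have hDq : (fun μ => D μ/μ^2 - δ*y^2) =O[l] fun μ => μ := by
    have h1 := hDl.mul (isBigO_refl (fun μ : ℝ => (μ^2)⁻¹) l)
    refine h1.congr' ?_ ?_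
    · filter_upwards [hμpos] with μ hμ
      field_simp
      all_goals ring
    · filter_upwards [hμpos] with μ hμ
      field_simp
      all_goals ring
  have hDqt : Tendsto (fun μ => D μ/μ^2) l (nhds (δ*y^2)) := by
    have h0 := hDq.trans_tendsto hμ0l
    have h4 := h0.add_const (δ*y^2)
    rw [zero_add] at h4
    exact Filter.Tendsto.congr (fun μ => by ring) h4
  have hDqlb : ∀ᶠ μ in l, δ*y^2/2 ≤ D μ/μ^2 :=
    Filter.Tendsto.eventually_const_le (by linarith) hDqt
  have hD0 : ∀ᶠ μ in l, 0 ≤ D μ := by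
    filter_upwards [hDqlb, hμpos] with μ h1 h2
    have hμ2 : (0:ℝ) < μ^2 := by positivity
    have h3 := (le_div_iff₀ hμ2).mp h1
    have h4 : 0 < δ*y^2/2*μ^2 := by positivity
    linarith
  obtain ⟨S, hS⟩ : ∃ S : ℝ, S = Real.sqrt (δ*y^2) := ⟨_, rfl⟩
  have hSpos : 0 < S := by rw [hS]; exact Real.sqrt_pos.2 hy2
  have hsq : (fun μ => Real.sqrt (D μ/μ^2) - S) =O[l] fun μ => μ := by
    refine (IsBigO.of_bound S⁻¹ ?_).trans hDq
    filter_upwards with μ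
    rw [Real.norm_eq_abs, Real.norm_eq_abs]
    have h := kre_sqrt_sub_le (a := D μ/μ^2) hy2
    rw [← hS] at h
    calc |Real.sqrt (D μ/μ^2) - S| ≤ |D μ/μ^2 - δ*y^2|/S := h
      _ = S⁻¹ * |D μ/μ^2 - δ*y^2| := by rw [div_eq_inv_mul]
  have hsqD : (fun μ => Real.sqrt (D μ) - S*μ) =O[l] fun μ => μ^2 := by
    have h1 := (isBigO_refl (fun μ : ℝ => μ) l).mul hsq
    refine h1.congr' ?_ ?_
    · filter_upwards [hμpos, hD0] with μ h2 h3
      have hsd : Real.sqrt (D μ/μ^2) = Real.sqrt (D μ)/μ := by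
        rw [Real.sqrt_div h3, Real.sqrt_sq h2.le]
      rw [hsd]
      field_simp
    · filter_upwards with μ
      ring
  have hdiv : ∀ (f : ℝ → ℝ) (c : ℝ), ((fun μ => f μ - c*μ) =O[l] fun μ => μ^2) →
      ((fun μ => f μ/(2*A μ) - c*μ/(2*α)) =O[l] fun μ => μ^2) := by
    intro f c hf
    have h1 := (hf.mul h2AinvO).congr_right (g₂ := fun μ => μ^2) fun μ => by ring
    have h2 : (fun μ => (c/(2*α)) * (μ * ((α - A μ) * (A μ)⁻¹))) =O[l] fun μ => μ^2 := by
      have hinner : (fun μ => α - A μ) =O[l] fun μ => μ :=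
        hAl.neg_left.congr_left fun μ => by ring
      have h := ((isBigO_refl (fun μ : ℝ => μ) l).mul (hinner.mul hAinvO)).const_mul_left (c/(2*α))
      exact h.congr_right (g₂ := fun μ => μ^2) fun μ => by ring
    have h3 := h1.add h2
    refine h3.congr' ?_ (Filter.EventuallyEq.refl _ _)
    filter_upwards [hA2] with μ hAμ
    have hA0 : A μ ≠ 0 := (lt_of_lt_of_le (half_pos hα) hAμ).ne'
    field_simp
    all_goals ring
  have hu := hdiv (fun μ => -B μ - 2*A μ) (σ₁₂*y) (hNx.mono hald)
  have hu' : (fun μ => -B μ/(2*A μ) - 1 - σ₁₂*y*μ/σ₁₁) =O[l] fun μ => μ^2 := by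
    refine hu.congr' ?_ (Filter.EventuallyEq.refl _ _)
    filter_upwards [hA2] with μ hAμ
    have hA0 : A μ ≠ 0 := (lt_of_lt_of_le (half_pos hα) hAμ).ne'
    rw [hσ]
    field_simp
    all_goals ring
  have hw := hdiv (fun μ => sg * Real.sqrt (D μ)) (sg*S)
    ((hsqD.const_mul_left sg).congr_left fun μ => by ring)
  have hSval : sg*S = Real.sqrt δ * y := by
    rw [hS, Real.sqrt_mul hδpos.le, Real.sqrt_sq_eq_abs]
    calc sg*(Real.sqrt δ*|y|) = Real.sqrt δ*(sg*|y|) := by ring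
      _ = Real.sqrt δ * y := by rw [hsgabs]
  have hv' : (fun μ => sg*Real.sqrt (D μ)/(2*A μ) - Real.sqrt δ*y*μ/σ₁₁) =O[l]
      fun μ => μ^2 := by
    refine hw.congr_left fun μ => ?_
    rw [hσ, hSval]
  obtain ⟨K₁, hK₁⟩ := hu'.bound
  obtain ⟨K₂, hK₂⟩ := hv'.bound
  obtain ⟨K, hK⟩ : ∃ K : ℝ, K = max K₁ 0 + max K₂ 0 + 1 := ⟨_, rfl⟩
  have hKpos : 0 < K := by
    rw [hK]
    positivity
  obtain ⟨rp, hrp⟩ : ∃ rp : ℝ → ℂ, rp = fun μ => ((-B μ/(2*A μ) : ℝ) : ℂ)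
    - Complex.I * ((sg*Real.sqrt (D μ)/(2*A μ) : ℝ) : ℂ) := ⟨_, rfl⟩
  obtain ⟨rm, hrm⟩ : ∃ rm : ℝ → ℂ, rm = fun μ => ((-B μ/(2*A μ) : ℝ) : ℂ)
    + Complex.I * ((sg*Real.sqrt (D μ)/(2*A μ) : ℝ) : ℂ) := ⟨_, rfl⟩
  have hall : ∀ᶠ μ in l, (0 < μ ∧ α/2 ≤ A μ ∧ 0 ≤ D μ ∧
      ‖-B μ/(2*A μ) - 1 - σ₁₂*y*μ/σ₁₁‖ ≤ K₁*‖μ^2‖ ∧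
      ‖sg*Real.sqrt (D μ)/(2*A μ) - Real.sqrt δ*y*μ/σ₁₁‖ ≤ K₂*‖μ^2‖) := by
    filter_upwards [hμpos, hA2, hD0, hK₁, hK₂] with μ a b c d e
    exact ⟨a, b, c, d, e⟩
  rw [hl, Filter.Eventually, mem_nhdsGT_iff_exists_Ioo_subset] at hall
  obtain ⟨ε, hε, hsub⟩ := hall
  refine ⟨ε, hε, K, hKpos, rp, rm, ?_⟩
  intro μ hμIoo
  obtain ⟨hμp, hAμ, hDμ, hb1, hb2⟩ := hsub hμIoo
  have hA0 : (0:ℝ) < A μ := lt_of_lt_of_le (half_pos hα) hAμ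
  have hA0' : A μ ≠ 0 := hA0.ne'
  have hA0c : (A μ : ℂ) ≠ 0 := by exact_mod_cast hA0'
  have hσ0 : σ₁₁ ≠ 0 := by rw [hσ]; positivity
  have hσ0c : (σ₁₁:ℂ) ≠ 0 := by exact_mod_cast hσ0
  have hnorm : ‖μ^2‖ = μ^2 := by
    rw [Real.norm_eq_abs, abs_of_nonneg (sq_nonneg μ)]
  rw [Real.norm_eq_abs, hnorm] at hb1 hb2
  refine ⟨?_, ?_, ?_⟩
  · intro X
    have k1 : A μ*(2*(-B μ/(2*A μ))) = -B μ := by field_simp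
    have k2 : A μ*((-B μ/(2*A μ))^2 + (sg*Real.sqrt (D μ)/(2*A μ))^2) = C μ := by
      have hDeq : D μ = 4*A μ*C μ - B μ^2 := by rw [hD]
      field_simp
      rw [hsg2, one_mul, Real.sq_sqrt hDμ, hDeq]
      ring
    have k1c : (A μ:ℂ)*(2*((-B μ/(2*A μ) : ℝ):ℂ)) = -(B μ:ℂ) := by exact_mod_cast k1
    have k2c : (A μ:ℂ)*((((-B μ/(2*A μ) : ℝ)):ℂ)^2 +
        (((sg*Real.sqrt (D μ)/(2*A μ) : ℝ)):ℂ)^2) = (C μ:ℂ) := by exact_mod_cast k2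
    have e1 : rp μ + rm μ = 2*((-B μ/(2*A μ) : ℝ):ℂ) := by
      simp only [hrp, hrm]; ring
    have e2 : rp μ * rm μ = (((-B μ/(2*A μ) : ℝ)):ℂ)^2 +
        (((sg*Real.sqrt (D μ)/(2*A μ) : ℝ)):ℂ)^2 := by
      simp only [hrp, hrm]
      linear_combination (-((((sg*Real.sqrt (D μ)/(2*A μ) : ℝ)):ℂ)^2)) * Complex.I_sq
    calc (A μ:ℂ)*X^2 + (B μ:ℂ)*X + (C μ:ℂ)
        = (A μ:ℂ)*X^2 - ((A μ:ℂ)*(2*((-B μ/(2*A μ):ℝ):ℂ)))*X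
          + (A μ:ℂ)*((((-B μ/(2*A μ):ℝ)):ℂ)^2 + (((sg*Real.sqrt (D μ)/(2*A μ):ℝ)):ℂ)^2) := by
          rw [k1c, k2c]; ring
      _ = (A μ:ℂ)*X^2 - (A μ:ℂ)*(rp μ + rm μ)*X + (A μ:ℂ)*(rp μ * rm μ) := by
          rw [e1, e2]
      _ = (A μ:ℂ)*(X - rp μ)*(X - rm μ) := by ring
  · have hrpe : rp μ - 1 + cp*(μ:ℂ)*(y:ℂ)
        = ((-B μ/(2*A μ) - 1 - σ₁₂*y*μ/σ₁₁ : ℝ):ℂ)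
          + Complex.I*((-(sg*Real.sqrt (D μ)/(2*A μ) - Real.sqrt δ*y*μ/σ₁₁) : ℝ):ℂ) := by
      simp only [hrp]
      rw [hcp]
      push_cast
      field_simp
      ring
    rw [hrpe]
    calc ‖_‖ ≤ ‖((-B μ/(2*A μ) - 1 - σ₁₂*y*μ/σ₁₁ : ℝ):ℂ)‖
          + ‖Complex.I*((-(sg*Real.sqrt (D μ)/(2*A μ) - Real.sqrt δ*y*μ/σ₁₁) : ℝ):ℂ)‖ :=
        norm_add_le _ _
      _ = |(-B μ/(2*A μ) - 1 - σ₁₂*y*μ/σ₁₁ : ℝ)|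
          + |(-(sg*Real.sqrt (D μ)/(2*A μ) - Real.sqrt δ*y*μ/σ₁₁) : ℝ)| := by
        rw [norm_mul, Complex.norm_real, Complex.norm_I, Complex.norm_real, one_mul, Real.norm_eq_abs, Real.norm_eq_abs]
      _ ≤ K*μ^2 := by
        rw [abs_neg]
        have h1 := le_max_left K₁ 0
        have h2 := le_max_left K₂ 0
        have h3 := sq_nonneg μ
        rw [Real.norm_eq_abs, hnorm] at *
        nlinarith [abs_nonneg (-B μ/(2*A μ) - 1 - σ₁₂*y*μ/σ₁₁),
          abs_nonneg (sg*Real.sqrt (D μ)/(2*A μ) - Real.sqrt δ*y*μ/σ₁₁)]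
  · have hrme : rm μ - 1 + cm*(μ:ℂ)*(y:ℂ)
        = ((-B μ/(2*A μ) - 1 - σ₁₂*y*μ/σ₁₁ : ℝ):ℂ)
          + Complex.I*(((sg*Real.sqrt (D μ)/(2*A μ) - Real.sqrt δ*y*μ/σ₁₁) : ℝ):ℂ) := by
      simp only [hrm]
      rw [hcm]
      push_cast
      field_simp
      ring
    rw [hrme]
    calc ‖_‖ ≤ ‖((-B μ/(2*A μ) - 1 - σ₁₂*y*μ/σ₁₁ : ℝ):ℂ)‖
          + ‖Complex.I*(((sg*Real.sqrt (D μ)/(2*A μ) - Real.sqrt δ*y*μ/σ₁₁) : ℝ):ℂ)‖ :=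
        norm_add_le _ _
      _ = |(-B μ/(2*A μ) - 1 - σ₁₂*y*μ/σ₁₁ : ℝ)|
          + |((sg*Real.sqrt (D μ)/(2*A μ) - Real.sqrt δ*y*μ/σ₁₁) : ℝ)| := by
        rw [norm_mul, Complex.norm_real, Complex.norm_I, Complex.norm_real, one_mul, Real.norm_eq_abs, Real.norm_eq_abs]
      _ ≤ K*μ^2 := by
        have h1 := le_max_left K₁ 0
        have h2 := le_max_left K₂ 0
        have h3 := sq_nonneg μ
        nlinarith [abs_nonneg (-B μ/(2*A μ) - 1 - σ₁₂*y*μ/σ₁₁),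
          abs_nonneg (sg*Real.sqrt (D μ)/(2*A μ) - Real.sqrt δ*y*μ/σ₁₁)]
end KREAux

/-- For a zero-drift walk with weights `p`, `σ₁₁ > 0`, `δ = σ₁₁σ₂₂ − σ₁₂² > 0` and
`ã(1) > 0`, the two roots `X_±(e^{−μy})` of the kernel `K(·, e^{−μy}) =
ã(e^{−μy})X² + b̃(e^{−μy})X + c̃(e^{−μy})` satisfy `X_±(e^{−μy}) = 1 − c_± μy + O(μ²)` as
`μ → 0⁺`, where `c_± = (−σ₁₂ ± i√δ)/σ₁₁`. -/

theorem kernel_roots_expansion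
    (p : ℤ → ℤ → ℝ) (hp0 : ∀ u v : ℤ, 0 ≤ p u v)
    (hp1 : ∑ u ∈ ({-1, 0, 1} : Finset ℤ), ∑ v ∈ ({-1, 0, 1} : Finset ℤ), p u v = 1)
    (hdrift1 : ∑ u ∈ ({-1, 0, 1} : Finset ℤ), ∑ v ∈ ({-1, 0, 1} : Finset ℤ),
      (u : ℝ) * p u v = 0)
    (hdrift2 : ∑ u ∈ ({-1, 0, 1} : Finset ℤ), ∑ v ∈ ({-1, 0, 1} : Finset ℤ),
      (v : ℝ) * p u v = 0)
    (σ₁₁ σ₁₂ σ₂₂ δ : ℝ)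
    (hσ₁₁ : σ₁₁ = ∑ u ∈ ({-1, 0, 1} : Finset ℤ), ∑ v ∈ ({-1, 0, 1} : Finset ℤ),
      (u : ℝ) ^ 2 * p u v)
    (hσ₁₂ : σ₁₂ = ∑ u ∈ ({-1, 0, 1} : Finset ℤ), ∑ v ∈ ({-1, 0, 1} : Finset ℤ),
      (u : ℝ) * (v : ℝ) * p u v)
    (hσ₂₂ : σ₂₂ = ∑ u ∈ ({-1, 0, 1} : Finset ℤ), ∑ v ∈ ({-1, 0, 1} : Finset ℤ),
      (v : ℝ) ^ 2 * p u v)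
    (hσ₁₁pos : 0 < σ₁₁) (hδ : δ = σ₁₁ * σ₂₂ - σ₁₂ ^ 2) (hδpos : 0 < δ)
    (hatil1 : 0 < ∑ v ∈ ({-1, 0, 1} : Finset ℤ), p (-1) v)
    (cp cm : ℂ)
    (hcp : cp = (-(σ₁₂ : ℂ) + Complex.I * Real.sqrt δ) / (σ₁₁ : ℂ))
    (hcm : cm = (-(σ₁₂ : ℂ) - Complex.I * Real.sqrt δ) / (σ₁₁ : ℂ)) :
    ∀ y : ℝ, ∃ ε > (0 : ℝ), ∃ C > (0 : ℝ), ∃ rp rm : ℝ → ℂ,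
      ∀ μ ∈ Set.Ioo (0 : ℝ) ε,
        (∀ X : ℂ,
          (coefA p (Real.exp (-μ * y)) : ℂ) * X ^ 2 +
              (coefB p (Real.exp (-μ * y)) : ℂ) * X +
              (coefC p (Real.exp (-μ * y)) : ℂ) =
            (coefA p (Real.exp (-μ * y)) : ℂ) * (X - rp μ) * (X - rm μ)) ∧
        ‖rp μ - 1 + cp * (μ : ℂ) * (y : ℂ)‖ ≤ C * μ ^ 2 ∧
        ‖rm μ - 1 + cm * (μ : ℂ) * (y : ℂ)‖ ≤ C * μ ^ 2 := by
  intro y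
  have hsum : ∀ f : ℤ → ℝ, ∑ v ∈ ({-1, 0, 1} : Finset ℤ), f v = f (-1) + f 0 + f 1 := by
    intro f
    rw [show ({-1, 0, 1} : Finset ℤ) = insert (-1) (insert 0 {1}) from rfl]
    rw [Finset.sum_insert (by decide), Finset.sum_insert (by decide), Finset.sum_singleton]
    ring
  simp only [hsum] at hp1 hdrift1 hdrift2 hσ₁₁ hσ₁₂ hσ₂₂ hatil1
  push_cast at hdrift1 hdrift2 hσ₁₁ hσ₁₂ hσ₂₂
  norm_num at hdrift1 hdrift2 hσ₁₁ hσ₁₂ hσ₂₂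
  have hAt : ∀ t : ℝ, coefA p t = p (-1) (-1) * t^2 + p (-1) 0 * t + p (-1) 1 := by
    intro t; rw [coefA, hsum]; norm_num [show Int.toNat 2 = 2 from rfl]
  have hBt : ∀ t : ℝ, coefB p t = p 0 (-1) * t^2 + p 0 0 * t + p 0 1 - t := by
    intro t; rw [coefB, hsum]; norm_num [show Int.toNat 2 = 2 from rfl]
  have hCt : ∀ t : ℝ, coefC p t = p 1 (-1) * t^2 + p 1 0 * t + p 1 1 := by
    intro t; rw [coefC, hsum]; norm_num [show Int.toNat 2 = 2 from rfl]
  have hαpos : 0 < p (-1) 1 + p (-1) 0 + p (-1) (-1) := by linarith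
  have hbeta : p 0 1 + (p 0 0 - 1) + p 0 (-1)
      = -2*(p (-1) 1 + p (-1) 0 + p (-1) (-1)) := by linarith
  have hgam : p 1 1 + p 1 0 + p 1 (-1) = p (-1) 1 + p (-1) 0 + p (-1) (-1) := by linarith
  have hKbeq : (p 0 0 - 1) + 2*p 0 (-1)
      = -((p (-1) 0 + 2*p (-1) (-1)) + (p 1 0 + 2*p 1 (-1))) := by linarith
  have hs12 : σ₁₂ = (p (-1) 0 + 2*p (-1) (-1)) - (p 1 0 + 2*p 1 (-1)) := by linarith
  have hσ22L : σ₂₂ = (p (-1) 0 + 4*p (-1) (-1)) + ((p 0 0 - 1) + 4*p 0 (-1))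
      + (p 1 0 + 4*p 1 (-1)) := by linarith
  have hσeq : σ₁₁ = 2*(p (-1) 1 + p (-1) 0 + p (-1) (-1)) := by linarith
  have hδ2 : δ = 2*(p (-1) 1 + p (-1) 0 + p (-1) (-1)) * ((p (-1) 0 + 4*p (-1) (-1))
      + ((p 0 0 - 1) + 4*p 0 (-1)) + (p 1 0 + 4*p 1 (-1))) - σ₁₂^2 := by
    rw [hδ, hσeq, hσ22L]
  by_cases hy0 : y = 0
  · subst hy0
    refine ⟨1, one_pos, 1, one_pos, (fun _ => 1), (fun _ => 1), ?_⟩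
    intro μ hμ
    have h0 : Real.exp (-μ*0) = 1 := by norm_num
    have hbc : (coefB p 1 : ℂ) = -2*(coefA p 1 : ℂ) := by
      have hr : coefB p 1 = -2*coefA p 1 := by
        rw [hAt 1, hBt 1]; norm_num; linarith
      exact_mod_cast hr
    have hcc : (coefC p 1 : ℂ) = (coefA p 1 : ℂ) := by
      have hr : coefC p 1 = coefA p 1 := by
        rw [hAt 1, hCt 1]; norm_num; linarith
      exact_mod_cast hr
    refine ⟨?_, ?_, ?_⟩
    · intro X
      rw [h0]
      linear_combination X*hbc + hcc
    · have hz : (1:ℂ) - 1 + cp*(μ:ℂ)*((0:ℝ):ℂ) = 0 := by push_cast; ring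
      rw [hz]
      simpa using by positivity
    · have hz : (1:ℂ) - 1 + cm*(μ:ℂ)*((0:ℝ):ℂ) = 0 := by push_cast; ring
      rw [hz]
      simpa using by positivity
  · obtain ⟨hAx, hNx, hDx⟩ := kre_combine y (p (-1) 1 + p (-1) 0 + p (-1) (-1))
      (p (-1) 0 + 2*p (-1) (-1)) ((p 0 0 - 1) + 2*p 0 (-1)) (p 1 0 + 2*p 1 (-1))
      (p (-1) 0 + 4*p (-1) (-1)) ((p 0 0 - 1) + 4*p 0 (-1)) (p 1 0 + 4*p 1 (-1))
      σ₁₂ δ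
      (fun μ => coefA p (Real.exp (-μ*y))) (fun μ => coefB p (Real.exp (-μ*y)))
      (fun μ => coefC p (Real.exp (-μ*y)))
      ((kre_expand3 y (p (-1) (-1)) (p (-1) 0) (p (-1) 1)).congr_left
        (fun μ => by simp only [hAt]))
      ((kre_expand3 y (p 0 (-1)) (p 0 0 - 1) (p 0 1)).congr_left
        (fun μ => by simp only [hBt]; linear_combination -hbeta))
      ((kre_expand3 y (p 1 (-1)) (p 1 0) (p 1 1)).congr_left
        (fun μ => by simp only [hCt]; linear_combination -hgam))
      hKbeq hs12 hδ2
    exact kre_main y σ₁₁ σ₁₂ δ (p (-1) 1 + p (-1) 0 + p (-1) (-1))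
      (fun μ => coefA p (Real.exp (-μ*y))) (fun μ => coefB p (Real.exp (-μ*y)))
      (fun μ => coefC p (Real.exp (-μ*y))) cp cm hy0 hαpos hδpos hσeq hcp hcm hAx hNx hDx
end

section
/- Let c₊ = (1 + i√3)/2 and c₋ = (1 − i√3)/2 in ℂ (the two roots of c² − c + 1 = 0), let f₁(x) = −3/x⁵ and L(h₁)(x,y) = 3(x+y)/(x³y³). Then for every nonzero complex y: f₁(c₊y) − f₁(c₋y) = L(h₁)(c₊y, y) − L(h₁)(c₋y, y). That is, f₁(x) = −3/x⁵ solves the continuous decoupling equation for the scaling limit of the tandem walk. -/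
/-- Let `cp = c₊ = (1 + i√3)/2` and `cm = c₋ = (1 − i√3)/2` (the two roots of
`c² − c + 1 = 0`), let `f₁(x) = −3/x⁵` and `L(h₁)(x,y) = 3(x+y)/(x³y³)`. Then for every
nonzero complex `y`: `f₁(c₊y) − f₁(c₋y) = L(h₁)(c₊y, y) − L(h₁)(c₋y, y)`, i.e.
`f₁(x) = −3/x⁵` solves the continuous decoupling equation for the scaling limit of the
tandem walk. -/
theorem tandem_continuous_decoupling
    (cp cm : ℂ) (hcp : cp = (1 + Complex.I * Real.sqrt 3) / 2)
    (hcm : cm = (1 - Complex.I * Real.sqrt 3) / 2)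
    (f₁ : ℂ → ℂ) (hf₁ : ∀ x : ℂ, f₁ x = -3 / x ^ 5)
    (L : ℂ → ℂ → ℂ) (hL : ∀ x y : ℂ, L x y = 3 * (x + y) / (x ^ 3 * y ^ 3)) :
    ∀ y : ℂ, y ≠ 0 → f₁ (cp * y) - f₁ (cm * y) = L (cp * y) y - L (cm * y) y := by
  intro y hy
  set s : ℂ := ((Real.sqrt 3 : ℝ) : ℂ) with hsdef
  have hs : s ^ 2 = 3 := by
    rw [hsdef]
    norm_cast
    exact Real.sq_sqrt (by norm_num)
  have hmul : cp * cm = 1 := by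
    rw [hcp, hcm]
    field_simp
    ring_nf
    rw [Complex.I_sq]
    linear_combination hs
  have hcp0 : cp ≠ 0 := left_ne_zero_of_mul_eq_one hmul
  have hcm0 : cm ≠ 0 := right_ne_zero_of_mul_eq_one hmul
  have hsum : cp + cm = 1 := by rw [hcp, hcm]; ring
  rw [hf₁, hf₁, hL, hL]
  have hI : Complex.I ^ 2 = -1 := Complex.I_sq
  have h3p : cp ^ 3 = -1 := by
    rw [hcp]
    linear_combination (-(3 + Complex.I * s) / 8) * hs + ((3 * s ^ 2 + Complex.I * s ^ 3) / 8) * hI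
  have h3m : cm ^ 3 = -1 := by
    linear_combination (-(cp ^ 2 * cm ^ 2 + cp * cm + 1)) * hmul + cm ^ 3 * h3p
  field_simp
  linear_combination (cp ^ 2 + cm + 1) * h3p - (cm ^ 2 + cp + 1) * h3m
    - (cp * cm + 1) * (cm ^ 3 * (cp + 1) - cp ^ 3 * (cm + 1)) * hmul + (cm - cp) * hsum
end

section
/- Let H₁(x,y) = 81(xy − 1)/(4(x−1)³(y−1)³) be the generating function of the discrete harmonic function of the tandem walk. Then for all real x > 0 and y > 0: lim_{μ→0⁺} μ⁵ · H₁(e^{−μx}, e^{−μy}) = −81(x+y)/(4x³y³) = −(27/4)·L(h₁)(x,y), where L(h₁)(x,y) = 3(x+y)/(x³y³) is the Laplace transform of the continuous harmonic function of the scaling limit of the tandem walk. In particular, the discrete harmonic generating function converges, after scaling by μ⁵ = μ^{k·π/θ + 2n} with k = n = 1 and π/θ = 3, to a nonzero multiple of the continuous one. -/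
open Filter Topology

lemma slope_exp_lim (c : ℝ) :
    Tendsto (fun μ : ℝ => (Real.exp (-μ * c) - 1) / μ) (𝓝[>] 0) (𝓝 (-c)) := by
  have hd : HasDerivAt (fun μ : ℝ => Real.exp (-μ * c)) (-c) 0 := by
    have hg : HasDerivAt (fun μ : ℝ => -μ * c) (-c) 0 := by
      simpa using ((hasDerivAt_id (0 : ℝ)).neg.mul_const c)
    simpa using hg.exp
  have := hasDerivAt_iff_tendsto_slope.mp hd
  have h2 : Tendsto (slope (fun μ : ℝ => Real.exp (-μ * c)) 0) (𝓝[>] 0) (𝓝 (-c)) :=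
    this.mono_left (nhdsWithin_mono _ (fun z hz => ne_of_gt hz))
  refine h2.congr (fun μ => ?_)
  simp [slope_def_field, div_eq_iff, sub_eq_iff_eq_add]

lemma inv_slope_lim {c : ℝ} (hc : 0 < c) :
    Tendsto (fun μ : ℝ => μ / (Real.exp (-μ * c) - 1)) (𝓝[>] 0) (𝓝 (-1 / c)) := by
  have h := (slope_exp_lim c).inv₀ (by simpa using hc.ne')
  have : (-c : ℝ)⁻¹ = -1 / c := by field_simp
  rw [this] at h
  refine h.congr (fun μ => ?_)
  rw [inv_div]

/-- Let `H₁(x,y) = 81(xy − 1)/(4(x−1)³(y−1)³)` be the generating function of the discrete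
harmonic function of the tandem walk. Then for all `x, y > 0`,
`lim_{μ→0⁺} μ⁵·H₁(e^{−μx}, e^{−μy}) = −81(x+y)/(4x³y³) = −(27/4)·L(h₁)(x,y)`, where
`L(h₁)(x,y) = 3(x+y)/(x³y³)` is the Laplace transform of the continuous harmonic function of
the scaling limit of the tandem walk: the discrete harmonic generating function converges,
after scaling by `μ⁵ = μ^{k·π/θ + 2n}` with `k = n = 1` and `π/θ = 3`, to a nonzero multiple
of the continuous one. -/
theorem tandem_convergence_harmonic
    (H₁ : ℝ → ℝ → ℝ)
    (hH₁ : ∀ a b : ℝ, H₁ a b = 81 * (a * b - 1) / (4 * (a - 1) ^ 3 * (b - 1) ^ 3))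
    (Lh₁ : ℝ → ℝ → ℝ)
    (hLh₁ : ∀ x y : ℝ, Lh₁ x y = 3 * (x + y) / (x ^ 3 * y ^ 3))
    (x y : ℝ) (hx : 0 < x) (hy : 0 < y) :
    Tendsto (fun μ : ℝ => μ ^ 5 * H₁ (Real.exp (-μ * x)) (Real.exp (-μ * y)))
        (𝓝[>] 0) (𝓝 (-81 * (x + y) / (4 * x ^ 3 * y ^ 3))) ∧
      -81 * (x + y) / (4 * x ^ 3 * y ^ 3) = -(27 / 4) * Lh₁ x y := by
  constructor
  · have hA := slope_exp_lim (x + y)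
    have hBx := inv_slope_lim hx
    have hBy := inv_slope_lim hy
    have hmain :
        Tendsto (fun μ : ℝ => 81 / 4 * ((Real.exp (-μ * (x + y)) - 1) / μ)
            * (μ / (Real.exp (-μ * x) - 1)) ^ 3 * (μ / (Real.exp (-μ * y) - 1)) ^ 3)
          (𝓝[>] 0)
          (𝓝 (81 / 4 * (-(x + y)) * (-1 / x) ^ 3 * (-1 / y) ^ 3)) := by
      exact (((hA.const_mul (81 / 4)).mul (hBx.pow 3)).mul (hBy.pow 3))
    have hval : 81 / 4 * (-(x + y)) * (-1 / x) ^ 3 * (-1 / y) ^ 3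
        = -81 * (x + y) / (4 * x ^ 3 * y ^ 3) := by
      field_simp
    rw [hval] at hmain
    refine hmain.congr' ?_
    filter_upwards [self_mem_nhdsWithin] with μ (hμ : 0 < μ)
    have hμ0 : μ ≠ 0 := hμ.ne'
    have hex : Real.exp (-μ * x) - 1 ≠ 0 := by
      have : Real.exp (-μ * x) < 1 := by
        rw [Real.exp_lt_one_iff]; nlinarith
      linarith
    have hey : Real.exp (-μ * y) - 1 ≠ 0 := by
      have : Real.exp (-μ * y) < 1 := by
        rw [Real.exp_lt_one_iff]; nlinarith
      linarith
    have hexy : Real.exp (-μ * (x + y)) = Real.exp (-μ * x) * Real.exp (-μ * y) := by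
      rw [← Real.exp_add]; ring_nf
    rw [hH₁, hexy]
    generalize Real.exp (-μ * x) = a at hex ⊢
    generalize Real.exp (-μ * y) = b at hey ⊢
    field_simp
  · rw [hLh₁]
    have hx3 : x ^ 3 ≠ 0 := pow_ne_zero 3 hx.ne'
    have hy3 : y ^ 3 ≠ 0 := pow_ne_zero 3 hy.ne'
    field_simp
    ring
end
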